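/- arXiv:1004.2653 — 5 statements merged into one kernel-verified Lean document; each statement's English description precedes it below -/
import Mathlib

section
/- Let f : ℝ → ℝ be a continuous function satisfying f(x + π) = f(x) and f(π − x) = f(x) for all x ≥ 0, and suppose the integral ∫₀^∞ (sin²x / x²) f(x) dx converges. Then ∫₀^∞ (sin²x / x²) f(x) dx = ∫₀^{π/2} f(x) dx. -/
open Real Filter MeasureTheory intervalIntegral


noncomputable def sc (x : ℝ) : ℝ := if x = 0 then 1 else Real.sin x / x

lemma sc_def : sc = Function.update (fun x => Real.sin x / x) 0 1 := by
  funext x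
  simp [sc, Function.update]

lemma continuous_sc : Continuous sc := by
  rw [continuous_iff_continuousAt]
  intro x
  rcases eq_or_ne x 0 with rfl | hx
  · rw [sc_def, continuousAt_update_same]
    have := (Real.hasDerivAt_sin 0)
    rw [hasDerivAt_iff_tendsto_slope] at this
    simp only [slope_fun_def, Real.sin_zero, Real.cos_zero, sub_zero, smul_eq_mul] at this
    refine this.congr (fun y => ?_)
    simp [inv_mul_eq_div]
  · have : ContinuousAt (fun x => Real.sin x / x) x :=
      (Real.continuous_sin.continuousAt).div continuousAt_id hx
    refine this.congr ?_
    filter_upwards [isOpen_ne.mem_nhds hx] with y hy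
    simp [sc, hy]

lemma sc_zero : sc 0 = 1 := by simp [sc]

lemma sc_of_ne (x : ℝ) (hx : x ≠ 0) : sc x = Real.sin x / x := by simp [sc, hx]

lemma sc_neg (x : ℝ) : sc (-x) = sc x := by
  rcases eq_or_ne x 0 with rfl | hx
  · simp
  · rw [sc_of_ne _ (neg_ne_zero.2 hx), sc_of_ne _ hx, Real.sin_neg, neg_div_neg_eq]

lemma sin_sq_le_sq (x : ℝ) : Real.sin x ^ 2 ≤ x ^ 2 := by
  rw [← sq_abs (Real.sin x), ← sq_abs x]
  exact pow_le_pow_left₀ (abs_nonneg _) Real.abs_sin_le_abs 2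

lemma sc_sq_le_one (x : ℝ) : (sc x) ^ 2 ≤ 1 := by
  rcases eq_or_ne x 0 with rfl | hx
  · simp [sc_zero]
  · rw [sc_of_ne _ hx, div_pow, div_le_one (by positivity)]
    exact sin_sq_le_sq x

lemma sc_sq_le (x : ℝ) (hx : x ≠ 0) : (sc x) ^ 2 ≤ 1 / x ^ 2 := by
  rw [sc_of_ne _ hx, div_pow, div_le_div_iff₀ (by positivity) (by positivity)]
  have := Real.sin_sq_le_one x
  nlinarith [sq_nonneg x]

lemma sc_two_mul_sq (y : ℝ) : (sc (2 * y)) ^ 2 = Real.cos y ^ 2 * (sc y) ^ 2 := by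
  rcases eq_or_ne y 0 with rfl | hy
  · simp [sc_zero]
  · rw [sc_of_ne _ (by simpa using hy), sc_of_ne _ hy, Real.sin_two_mul]
    field_simp

lemma sin_sq_add_int (x : ℝ) (n : ℤ) : Real.sin (x + n * π) ^ 2 = Real.sin x ^ 2 := by
  rw [Real.sin_add_int_mul_pi, mul_pow, ← zpow_natCast ((-1:ℝ)^n) 2, ← zpow_mul]
  norm_num
  rw [mul_comm n 2, zpow_mul]
  norm_num

lemma cos_sq_add_int (x : ℝ) (n : ℤ) : Real.cos (x + n * π) ^ 2 = Real.cos x ^ 2 := by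
  rw [Real.cos_add_int_mul_pi, mul_pow, ← zpow_natCast ((-1:ℝ)^n) 2, ← zpow_mul]
  norm_num
  rw [mul_comm n 2, zpow_mul]
  norm_num




noncomputable def SS (x : ℝ) : ℝ := ∑' n : ℤ, (sc (x + n * π)) ^ 2

noncomputable def uu (n : ℤ) : ℝ := 8 / ((n : ℝ) ^ 2 + 1)

lemma summable_uu : Summable uu := by
  have h : Summable (fun n : ℤ => 8 * (1 / (n : ℝ) ^ 2)) :=
    (summable_one_div_int_pow.2 one_lt_two).mul_left 8
  refine h.of_norm_bounded_eventually ?_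
  filter_upwards [eventually_cofinite_ne (0 : ℤ)] with n hn
  have hn2 : (0:ℝ) < (n:ℝ) ^ 2 :=
    (sq_nonneg _).lt_of_ne (Ne.symm (pow_ne_zero 2 (Int.cast_ne_zero.2 hn)))
  rw [uu, Real.norm_eq_abs, abs_of_nonneg (by positivity), mul_one_div]
  gcongr
  linarith

lemma term_le_uu (n : ℤ) : ∀ x ∈ Set.Icc (0:ℝ) π, (sc (x + n * π)) ^ 2 ≤ uu n := by
  intro x ⟨hx0, hxpi⟩
  have hpi3 : (3:ℝ) < π := Real.pi_gt_three
  rcases lt_trichotomy n 0 with hn | rfl | hn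
  · rcases eq_or_lt_of_le (by omega : n ≤ -1) with rfl | hn2
    · refine (sc_sq_le_one _).trans ?_
      norm_num [uu]
    · -- n ≤ -2
      have hn2 : n ≤ -2 := by omega
      have hcast : ((n:ℝ)) ≤ -2 := by exact_mod_cast hn2
      have ht : x + n * π ≤ ((n:ℝ) + 1) * π := by nlinarith
      have hu0 : ((n:ℝ) + 1) * π ≤ 0 := by nlinarith
      have htneg : x + n * π < 0 := by nlinarith
      have h9 : (9:ℝ) ≤ π ^ 2 := by nlinarith
      have hsq : (((n:ℝ) + 1) * π) ^ 2 ≤ (x + n * π) ^ 2 := by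
        nlinarith [mul_nonneg (sub_nonneg.2 ht)
          (neg_nonneg.2 (add_nonpos (le_of_lt htneg) hu0))]
      have hsq2 : 9 * ((n:ℝ) + 1) ^ 2 ≤ (x + n * π) ^ 2 := by
        nlinarith [sq_nonneg ((n:ℝ) + 1), mul_pow ((n:ℝ)+1) π 2]
      refine (sc_sq_le _ (ne_of_lt htneg)).trans ?_
      rw [uu, div_le_div_iff₀
        (by nlinarith [mul_pos (neg_pos.2 htneg) (neg_pos.2 htneg)]) (by positivity)]
      nlinarith [hsq2, mul_nonneg (neg_nonneg.2 (by linarith : ((n:ℝ) + 1) ≤ 0))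
        (neg_nonneg.2 (by linarith : ((n:ℝ) + 2) ≤ 0))]
  · refine (sc_sq_le_one _).trans ?_
    norm_num [uu]
  · have hcast : (1:ℝ) ≤ (n:ℝ) := by exact_mod_cast hn
    have ht : (n:ℝ) * π ≤ x + n * π := by linarith
    have htpos : 0 < x + n * π := by nlinarith
    have h3n : 3 * (n:ℝ) ≤ x + n * π := by nlinarith
    have hsq : 9 * (n:ℝ) ^ 2 ≤ (x + n * π) ^ 2 := by
      nlinarith [mul_nonneg (sub_nonneg.2 h3n) (by linarith : (0:ℝ) ≤ x + n * π + 3 * n)]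
    refine (sc_sq_le _ (ne_of_gt htpos)).trans ?_
    rw [uu, div_le_div_iff₀ (by positivity) (by positivity)]
    nlinarith [hsq, sq_nonneg ((n:ℝ) - 1)]

lemma summable_SS {x : ℝ} (hx : x ∈ Set.Icc (0:ℝ) π) :
    Summable (fun n : ℤ => (sc (x + n * π)) ^ 2) :=
  Summable.of_nonneg_of_le (fun n => sq_nonneg _) (fun n => term_le_uu n x hx) summable_uu

lemma SS_periodic (x : ℝ) : SS (x + π) = SS x := by
  rw [SS, SS, ← (Equiv.addRight (1:ℤ)).tsum_eq (fun n : ℤ => (sc (x + n * π)) ^ 2)]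
  refine tsum_congr fun n => ?_
  push_cast [Equiv.coe_addRight]
  ring_nf

lemma SS_contOn : ContinuousOn SS (Set.Icc 0 π) := by
  refine continuousOn_tsum (fun n => ?_) summable_uu (fun n x hx => ?_)
  · exact ((continuous_sc.comp (continuous_id.add continuous_const)).pow 2).continuousOn
  · rw [Real.norm_eq_abs, abs_of_nonneg (sq_nonneg _)]
    exact term_le_uu n x hx

lemma SS_zero : SS 0 = 1 := by
  rw [SS]
  rw [tsum_eq_single 0 (fun n hn => ?_)]
  · simp [sc_zero]
  · have h1 : ((n:ℝ)) * π ≠ 0 := by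
      have : (n:ℝ) ≠ 0 := Int.cast_ne_zero.2 hn
      positivity
    rw [zero_add, sc_of_ne _ h1, Real.sin_int_mul_pi, zero_div]
    norm_num

lemma tsum_int_even_odd {h : ℤ → ℝ} (hs : Summable h) :
    ∑' n : ℤ, h n = (∑' k : ℤ, h (2 * k)) + ∑' k : ℤ, h (2 * k + 1) := by
  have he : Summable (fun n : ℤ => if Even n then h n else 0) :=
    hs.abs.of_norm_bounded (fun n => by split <;> simp [abs_nonneg])
  have ho : Summable (fun n : ℤ => if Even n then 0 else h n) :=
    hs.abs.of_norm_bounded (fun n => by split <;> simp [abs_nonneg])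
  have h1 : ∑' n : ℤ, h n =
      (∑' n : ℤ, if Even n then h n else 0) + ∑' n : ℤ, if Even n then 0 else h n := by
    rw [← he.tsum_add ho]
    refine tsum_congr fun n => by split <;> simp
  rw [h1]
  congr 1
  · rw [← Function.Injective.tsum_eq (g := fun k : ℤ => 2 * k)
      (fun a b hab => by simpa using hab) (f := fun n : ℤ => if Even n then h n else 0) ?_]
    · refine tsum_congr fun k => ?_
      simp [even_two_mul]
    · intro n hn
      simp only [Function.mem_support, ne_eq, ite_eq_right_iff, not_forall] at hn
      obtain ⟨⟨r, hr⟩, -⟩ := hn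
      exact ⟨r, by dsimp only; omega⟩
  · rw [← Function.Injective.tsum_eq (g := fun k : ℤ => 2 * k + 1)
      (fun a b hab => by dsimp only at hab; omega) (f := fun n : ℤ => if Even n then 0 else h n) ?_]
    · refine tsum_congr fun k => ?_
      have : ¬ Even (2 * k + 1) := by
        simp [Int.even_add_one, even_two_mul]
      simp [this]
    · intro n hn
      simp only [Function.mem_support, ne_eq, ite_eq_left_iff, not_forall] at hn
      obtain ⟨hne, -⟩ := hn
      rw [Int.not_even_iff_odd] at hne
      obtain ⟨r, hr⟩ := hne
      exact ⟨r, by dsimp only; omega⟩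

lemma SS_doubling {x : ℝ} (hx : x ∈ Set.Icc (0:ℝ) π) :
    SS x = Real.cos (x/2) ^ 2 * SS (x/2) + Real.sin (x/2) ^ 2 * SS (x/2 + π/2) := by
  rw [SS, tsum_int_even_odd (summable_SS hx)]
  congr 1
  · rw [SS, ← tsum_mul_left]
    refine tsum_congr fun k => ?_
    have h1 : x + ((2 * k : ℤ) : ℝ) * π = 2 * (x/2 + k * π) := by push_cast; ring
    rw [h1, sc_two_mul_sq]
    congr 1
    rw [show x/2 + (k:ℝ) * π = x/2 + (k:ℤ) * π by norm_num]
    exact cos_sq_add_int (x/2) k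
  · rw [SS, ← tsum_mul_left]
    refine tsum_congr fun k => ?_
    have h1 : x + ((2 * k + 1 : ℤ) : ℝ) * π = 2 * (x/2 + π/2 + k * π) := by push_cast; ring
    rw [h1, sc_two_mul_sq]
    congr 1
    rw [show x/2 + π/2 + (k:ℝ) * π = x/2 + π/2 + (k:ℤ) * π by norm_num]
    rw [cos_sq_add_int (x/2 + π/2) k]
    rw [Real.cos_add_pi_div_two, neg_sq]




-- the sequence x/2^n stays in Ioo and tends to 0
lemma half_mem {x : ℝ} (hx : x ∈ Set.Ioo (0:ℝ) π) : x / 2 ∈ Set.Ioo (0:ℝ) π := by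
  obtain ⟨h1, h2⟩ := hx
  constructor <;> [positivity; linarith]

lemma mem_step {x : ℝ} (hx : x ∈ Set.Ioo (0:ℝ) π) :
    x / 2 ∈ Set.Icc (0:ℝ) π ∧ x / 2 + π / 2 ∈ Set.Icc (0:ℝ) π := by
  obtain ⟨h1, h2⟩ := hx
  have := Real.pi_pos
  constructor <;> constructor <;> linarith

/-- If SS is extremal (in the ≤ sense given by `cmp`) at a point of `Ioo 0 π`,
the same value is attained at the half point. -/
lemma SS_half_eq_of_max {x : ℝ} (hx : x ∈ Set.Ioo (0:ℝ) π)
    (hle : ∀ y ∈ Set.Icc (0:ℝ) π, SS y ≤ SS x) : SS (x/2) = SS x := by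
  obtain ⟨hm1, hm2⟩ := mem_step hx
  have hd := SS_doubling (Set.Ioo_subset_Icc_self hx)
  have ha : SS (x/2) ≤ SS x := hle _ hm1
  have hb : SS (x/2 + π/2) ≤ SS x := hle _ hm2
  have hc : Real.cos (x/2) ^ 2 + Real.sin (x/2) ^ 2 = 1 := by
    rw [add_comm]; exact Real.sin_sq_add_cos_sq _
  have hcpos : 0 < Real.cos (x/2) ^ 2 := by
    have : 0 < Real.cos (x/2) :=
      Real.cos_pos_of_mem_Ioo ⟨by linarith [hx.1, Real.pi_pos], by linarith [hx.2]⟩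
    positivity
  have hs : 0 ≤ Real.sin (x/2) ^ 2 := sq_nonneg _
  have hkey : Real.cos (x/2) ^ 2 * SS x + Real.sin (x/2) ^ 2 * SS x = SS x := by
    rw [← add_mul, hc, one_mul]
  refine le_antisymm ha ?_
  have h1 : Real.cos (x/2) ^ 2 * SS x ≤ Real.cos (x/2) ^ 2 * SS (x/2) := by
    linarith [mul_le_mul_of_nonneg_left hb hs]
  exact le_of_mul_le_mul_left h1 hcpos

lemma SS_half_eq_of_min {x : ℝ} (hx : x ∈ Set.Ioo (0:ℝ) π)
    (hle : ∀ y ∈ Set.Icc (0:ℝ) π, SS x ≤ SS y) : SS (x/2) = SS x := by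
  obtain ⟨hm1, hm2⟩ := mem_step hx
  have hd := SS_doubling (Set.Ioo_subset_Icc_self hx)
  have ha : SS x ≤ SS (x/2) := hle _ hm1
  have hb : SS x ≤ SS (x/2 + π/2) := hle _ hm2
  have hc : Real.cos (x/2) ^ 2 + Real.sin (x/2) ^ 2 = 1 := by
    rw [add_comm]; exact Real.sin_sq_add_cos_sq _
  have hcpos : 0 < Real.cos (x/2) ^ 2 := by
    have : 0 < Real.cos (x/2) :=
      Real.cos_pos_of_mem_Ioo ⟨by linarith [hx.1, Real.pi_pos], by linarith [hx.2]⟩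
    positivity
  have hs : 0 ≤ Real.sin (x/2) ^ 2 := sq_nonneg _
  have hkey : Real.cos (x/2) ^ 2 * SS x + Real.sin (x/2) ^ 2 * SS x = SS x := by
    rw [← add_mul, hc, one_mul]
  refine le_antisymm ?_ ha
  have h1 : Real.cos (x/2) ^ 2 * SS (x/2) ≤ Real.cos (x/2) ^ 2 * SS x := by
    linarith [mul_le_mul_of_nonneg_left hb hs]
  exact le_of_mul_le_mul_left h1 hcpos

lemma SS_extreme_eq_one {x₀ : ℝ} (hx₀ : x₀ ∈ Set.Icc (0:ℝ) π)
    (hext : (∀ y ∈ Set.Icc (0:ℝ) π, SS y ≤ SS x₀) ∨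
            (∀ y ∈ Set.Icc (0:ℝ) π, SS x₀ ≤ SS y)) :
    SS x₀ = 1 := by
  have hpi := Real.pi_pos
  rcases eq_or_lt_of_le hx₀.1 with h0 | h0
  · rw [← h0, SS_zero]
  rcases eq_or_lt_of_le hx₀.2 with hpi' | hpi'
  · -- x₀ = π : SS π = SS 0 = 1
    rw [hpi', ← zero_add π, SS_periodic, SS_zero]
  -- x₀ ∈ Ioo 0 π
  have hIoo : x₀ ∈ Set.Ioo (0:ℝ) π := ⟨h0, hpi'⟩
  have hseq : ∀ n : ℕ, x₀ / 2 ^ n ∈ Set.Ioo (0:ℝ) π ∧ SS (x₀ / 2 ^ n) = SS x₀ := by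
    intro n
    induction n with
    | zero => simpa using hIoo
    | succ n ih =>
      obtain ⟨hmem, heq⟩ := ih
      have h2 : x₀ / 2 ^ (n + 1) = (x₀ / 2 ^ n) / 2 := by ring
      have heq2 : SS (x₀ / 2 ^ (n+1)) = SS (x₀ / 2 ^ n) := by
        rw [h2]
        rcases hext with hext | hext
        · exact (SS_half_eq_of_max hmem (by intro y hy; rw [heq]; exact hext y hy))
        · exact (SS_half_eq_of_min hmem (by intro y hy; rw [heq]; exact hext y hy))
      exact ⟨h2 ▸ half_mem hmem, heq2.trans heq⟩
  -- limit
  have htend0 : Tendsto (fun n : ℕ => x₀ / 2 ^ n) atTop (nhds 0) := by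
    have : Tendsto (fun n : ℕ => x₀ * (1/2 : ℝ) ^ n) atTop (nhds (x₀ * 0)) :=
      (tendsto_pow_atTop_nhds_zero_of_lt_one (by norm_num) (by norm_num)).const_mul x₀
    simpa [div_eq_mul_inv, inv_pow, one_div] using this
  have htendin : Tendsto (fun n : ℕ => x₀ / 2 ^ n) atTop (nhdsWithin 0 (Set.Icc 0 π)) := by
    refine tendsto_nhdsWithin_of_tendsto_nhds_of_eventually_within _ htend0 ?_
    exact Eventually.of_forall fun n => Set.Ioo_subset_Icc_self (hseq n).1
  have hlim : Tendsto (fun n : ℕ => SS (x₀ / 2 ^ n)) atTop (nhds (SS 0)) :=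
    (SS_contOn 0 ⟨le_refl _, hpi.le⟩).tendsto.comp htendin
  have hconst : Tendsto (fun _ : ℕ => SS x₀) atTop (nhds (SS x₀)) := tendsto_const_nhds
  have : SS 0 = SS x₀ :=
    tendsto_nhds_unique (hlim.congr fun n => (hseq n).2) hconst
  rw [← this, SS_zero]

lemma SS_eq_one {x : ℝ} (hx : x ∈ Set.Icc (0:ℝ) π) : SS x = 1 := by
  have hpi := Real.pi_pos
  obtain ⟨xM, hxM, hmax⟩ :=
    isCompact_Icc.exists_isMaxOn (Set.nonempty_Icc.2 hpi.le) SS_contOn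
  obtain ⟨xm, hxm, hmin⟩ :=
    isCompact_Icc.exists_isMinOn (Set.nonempty_Icc.2 hpi.le) SS_contOn
  have hM : SS xM = 1 := SS_extreme_eq_one hxM (Or.inl fun y hy => hmax hy)
  have hm : SS xm = 1 := SS_extreme_eq_one hxm (Or.inr fun y hy => hmin hy)
  have h1 : SS x ≤ 1 := hM ▸ hmax hx
  have h2 : 1 ≤ SS x := hm ▸ hmin hx
  linarith




/-- If `f` is continuous, `π`-periodic and symmetric about `π/2` on `[0, ∞)`, and the
improper integral `∫₀^∞ (sin² x / x²) f x dx` converges to `I`, then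
`I = ∫₀^{π/2} f x dx`. -/
theorem integral_sin_sq_div_sq_eq (f : ℝ → ℝ) (hf : Continuous f)
    (hper : ∀ x : ℝ, 0 ≤ x → f (x + π) = f x)
    (hsym : ∀ x : ℝ, 0 ≤ x → f (π - x) = f x)
    (I : ℝ)
    (hI : Tendsto (fun T : ℝ => ∫ x in (0:ℝ)..T, (Real.sin x / x) ^ 2 * f x)
      atTop (nhds I)) :
    I = ∫ x in (0:ℝ)..(π / 2), f x := by
  have hpi := Real.pi_pos
  set F : ℝ → ℝ := fun x => (sc x) ^ 2 * f x with hF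
  have hFc : Continuous F := ((continuous_sc.pow 2).mul hf)
  -- replace integrand by F
  have hcongr : ∀ T : ℝ, (∫ x in (0:ℝ)..T, (Real.sin x / x) ^ 2 * f x)
      = ∫ x in (0:ℝ)..T, F x := by
    intro T
    refine intervalIntegral.integral_congr_ae ?_
    have h0 : ∀ᵐ x : ℝ, x ≠ 0 := by
      rw [MeasureTheory.ae_iff]
      simpa using Real.volume_singleton
    filter_upwards [h0] with x hx _
    show (Real.sin x / x) ^ 2 * f x = (sc x) ^ 2 * f x
    rw [sc_of_ne x hx]
  have hIF : Tendsto (fun T : ℝ => ∫ x in (0:ℝ)..T, F x) atTop (nhds I) :=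
    hI.congr hcongr
  -- periodicity of f for natural multiples
  have hperN : ∀ (k : ℕ) (x : ℝ), 0 ≤ x → f (x + k * π) = f x := by
    intro k
    induction k with
    | zero => intro x _; simp
    | succ k ih =>
      intro x hx
      have h1 : x + ((k:ℝ) + 1) * π = (x + k * π) + π := by ring
      push_cast
      rw [h1, hper _ (by positivity), ih x hx]
  -- integrability helpers
  have hint1 : ∀ a b d : ℝ, IntervalIntegrable (fun x => (sc (x + d)) ^ 2 * f x) volume a b :=
    fun a b d => Continuous.intervalIntegrable
      (by exact ((continuous_sc.comp (continuous_id.add continuous_const)).pow 2).mul hf) _ _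
  have hint2 : ∀ a b d : ℝ, IntervalIntegrable (fun x => (sc (x - d)) ^ 2 * f x) volume a b :=
    fun a b d => Continuous.intervalIntegrable
      (by exact ((continuous_sc.comp (continuous_id.sub continuous_const)).pow 2).mul hf) _ _
  -- the summands
  set c : ℕ → ℝ := fun k =>
    ∫ x in (0:ℝ)..(π/2), ((sc (x + k * π)) ^ 2 + (sc (x - (k + 1) * π)) ^ 2) * f x
    with hc
  -- Step (i)
  have hstep1 : ∀ N : ℕ, (∫ x in (0:ℝ)..(N * π), F x) = ∑ k ∈ Finset.range N, c k := by
    intro N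
    have hadj : ∑ k ∈ Finset.range N, (∫ x in ((k:ℝ) * π)..((k:ℝ) + 1) * π, F x)
        = ∫ x in (0:ℝ)..(N * π), F x := by
      have := intervalIntegral.sum_integral_adjacent_intervals
        (μ := volume) (a := fun k : ℕ => (k : ℝ) * π) (n := N)
        (fun k _ => hFc.intervalIntegrable _ _)
      simp only [Nat.cast_zero, zero_mul] at this
      rw [← this]
      refine Finset.sum_congr rfl fun k _ => ?_
      push_cast
      ring_nf
    rw [← hadj]
    refine Finset.sum_congr rfl fun k _ => ?_
    -- translate
    have htrans : (∫ x in (0:ℝ)..π, F (x + k * π))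
        = ∫ x in ((k:ℝ) * π)..((k:ℝ) + 1) * π, F x := by
      rw [intervalIntegral.integral_comp_add_right]
      congr 1 <;> ring
    rw [← htrans]
    have hFtrans : (∫ x in (0:ℝ)..π, F (x + k * π))
        = ∫ x in (0:ℝ)..π, (sc (x + k * π)) ^ 2 * f x := by
      refine intervalIntegral.integral_congr fun x hx => ?_
      rw [Set.uIcc_of_le (by positivity)] at hx
      rw [hF]
      simp only []
      rw [hperN k x hx.1]
    rw [hFtrans]
    -- split at π/2 and fold
    have hsplit : (∫ x in (0:ℝ)..π, (sc (x + k * π)) ^ 2 * f x)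
        = (∫ x in (0:ℝ)..(π/2), (sc (x + k * π)) ^ 2 * f x)
          + ∫ x in (π/2)..π, (sc (x + k * π)) ^ 2 * f x :=
      (intervalIntegral.integral_add_adjacent_intervals
        (hint1 _ _ _) (hint1 _ _ _)).symm
    have hrefl : (∫ x in (π/2)..π, (sc (x + k * π)) ^ 2 * f x)
        = ∫ x in (0:ℝ)..(π/2), (sc (x - (k + 1) * π)) ^ 2 * f x := by
      have h1 : (∫ x in (0:ℝ)..(π/2), (sc (π - x + k * π)) ^ 2 * f (π - x))
          = ∫ x in (π/2)..π, (sc (x + k * π)) ^ 2 * f x := by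
        have := intervalIntegral.integral_comp_sub_left (a := (0:ℝ)) (b := π/2)
          (f := fun x => (sc (x + k * π)) ^ 2 * f x) π
        rw [this]
        congr 1 <;> ring
      rw [← h1]
      refine intervalIntegral.integral_congr fun x hx => ?_
      rw [Set.uIcc_of_le (by positivity)] at hx
      rw [hsym x hx.1]
      congr 2
      rw [show π - x + k * π = -(x - (k+1) * π) by ring, sc_neg]
    rw [hsplit, hrefl]
    simp only [hc]
    rw [← intervalIntegral.integral_add (hint1 _ _ _) (hint2 _ _ _)]
    refine intervalIntegral.integral_congr fun x hx => ?_
    ring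
  -- Step (ii): HasSum c (∫ f)
  set G : ℕ → ℝ → ℝ := fun k x =>
    ((sc (x + k * π)) ^ 2 + (sc (x - (k + 1) * π)) ^ 2) * f x with hG
  have hGc : ∀ k, Continuous (G k) := fun k =>
    (((continuous_sc.comp (continuous_id.add continuous_const)).pow 2).add
      ((continuous_sc.comp (continuous_id.sub continuous_const)).pow 2)).mul hf
  set μ : Measure ℝ := volume.restrict (Set.Ioc 0 (π/2)) with hμ
  have hGint : ∀ k, Integrable (G k) μ := by
    intro k
    rw [hμ]
    exact (hGc k).integrableOn_Ioc
  obtain ⟨C, hC⟩ := isCompact_Icc.exists_bound_of_continuousOn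
    (s := Set.Icc (0:ℝ) (π/2)) hf.continuousOn
  have hC0 : 0 ≤ C := le_trans (norm_nonneg _) (hC 0 ⟨le_refl _, by positivity⟩)
  -- pointwise bounds
  have hbound : ∀ k : ℕ, ∀ x ∈ Set.Ioc (0:ℝ) (π/2),
      ‖G k x‖ ≤ 2 / ((k:ℝ) + 1) ^ 2 * C := by
    intro k x hx
    obtain ⟨hx0, hx2⟩ := hx
    have hb1 : (sc (x + k * π)) ^ 2 ≤ 1 / ((k:ℝ) + 1) ^ 2 := by
      rcases Nat.eq_zero_or_pos k with rfl | hk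
      · simpa using sc_sq_le_one x
      · have hk1 : (1:ℝ) ≤ (k:ℝ) := by exact_mod_cast hk
        have ht : (k:ℝ) + 1 ≤ x + k * π := by nlinarith [Real.pi_gt_three]
        have htpos : (0:ℝ) < x + k * π := by linarith [hk1]
        refine (sc_sq_le _ (ne_of_gt htpos)).trans
          (one_div_le_one_div_of_le (by positivity) ?_)
        exact pow_le_pow_left₀ (by positivity) ht 2
    have hb2 : (sc (x - (k + 1) * π)) ^ 2 ≤ 1 / ((k:ℝ) + 1) ^ 2 := by
      have hk1 : (1:ℝ) ≤ (k:ℝ) + 1 := by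
        have := Nat.cast_nonneg (α := ℝ) k
        linarith
      have ht : x - (k + 1) * π ≤ -((k:ℝ) + 1) := by nlinarith [Real.pi_gt_three]
      have htneg : x - (k + 1) * π < 0 := by nlinarith [Real.pi_gt_three]
      refine (sc_sq_le _ (ne_of_lt htneg)).trans ?_
      rw [div_le_div_iff₀ (by nlinarith) (by positivity)]
      nlinarith [mul_nonneg (sub_nonneg.2 ht) (by nlinarith : (0:ℝ) ≤ -(x - (k+1)*π) + ((k:ℝ)+1))]
    have hfx : ‖f x‖ ≤ C := hC x ⟨hx0.le, hx2⟩
    rw [hG]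
    simp only [norm_mul]
    have hnn : ‖(sc (x + k * π)) ^ 2 + (sc (x - (k + 1) * π)) ^ 2‖
        ≤ 2 / ((k:ℝ) + 1) ^ 2 := by
      rw [Real.norm_eq_abs, abs_of_nonneg (by positivity)]
      have : (2:ℝ) / ((k:ℝ) + 1) ^ 2 = 1 / ((k:ℝ)+1)^2 + 1/((k:ℝ)+1)^2 := by ring
      rw [this]
      exact add_le_add hb1 hb2
    exact mul_le_mul hnn hfx (norm_nonneg _) (by positivity)
  -- summability of integrals of norms
  have hsum : Summable (fun k : ℕ => ∫ x, ‖G k x‖ ∂μ) := by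
    have hle : ∀ k : ℕ, (∫ x, ‖G k x‖ ∂μ) ≤ (2 / ((k:ℝ) + 1) ^ 2 * C) * (π/2) := by
      intro k
      have h1 : (∫ x, ‖G k x‖ ∂μ) ≤ ∫ x in Set.Ioc (0:ℝ) (π/2), (2 / ((k:ℝ) + 1) ^ 2 * C) := by
        rw [hμ]
        refine setIntegral_mono_on ((hGc k).norm.integrableOn_Ioc) 
          (integrableOn_const (by rw [Real.volume_Ioc]; exact ENNReal.ofReal_ne_top))
          measurableSet_Ioc (hbound k)
      refine h1.trans ?_
      rw [setIntegral_const]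
      rw [measureReal_def, Real.volume_Ioc, smul_eq_mul]
      rw [ENNReal.toReal_ofReal (by rw [sub_zero]; positivity)]
      exact le_of_eq (by ring)
    refine Summable.of_nonneg_of_le (fun k => integral_nonneg fun x => norm_nonneg _) hle ?_
    have hs2 : Summable (fun k : ℕ => 1 / ((k:ℝ) + 1) ^ 2) := by
      have h := (Real.summable_one_div_nat_pow (p := 2)).2 one_lt_two
      have h2 := (summable_nat_add_iff 1).2 h
      refine h2.congr fun n => ?_
      push_cast
      ring
    exact (hs2.mul_left (C * π)).congr fun k => by field_simp
  -- pointwise tsum identity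
  have hSS1 : ∀ x ∈ Set.Ioc (0:ℝ) (π/2), (∑' k : ℕ, G k x) = f x := by
    intro x hx
    have hx' : x ∈ Set.Icc (0:ℝ) π := ⟨hx.1.le, hx.2.trans (by linarith)⟩
    have hsum' := summable_SS hx'
    have h2 : (∑' k : ℕ, G k x) = (∑' k : ℕ,
        (sc (x + (k:ℝ) * π) ^ 2 + sc (x + -((k:ℝ) + 1) * π) ^ 2)) * f x := by
      rw [← tsum_mul_right]
      refine tsum_congr fun k => ?_
      rw [hG]
      push_cast
      ring_nf
    have h4 : (∑' k : ℕ, (sc (x + (k:ℝ) * π) ^ 2 + sc (x + -((k:ℝ) + 1) * π) ^ 2))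
        = ∑' n : ℤ, sc (x + n * π) ^ 2 := by
      rw [← tsum_nat_add_neg_add_one hsum']
      refine tsum_congr fun k => ?_
      push_cast
      ring_nf
    rw [h2, h4, show (∑' n : ℤ, sc (x + n * π) ^ 2) = SS x from rfl,
      SS_eq_one hx', one_mul]

  have hhs := hasSum_integral_of_summable_integral_norm hGint hsum
  have hcG : (fun k : ℕ => ∫ x, G k x ∂μ) = c := by
    funext k
    simp only [hc]
    rw [hμ, intervalIntegral.integral_of_le (by positivity)]
  have hid : (∫ x, (∑' k, G k x) ∂μ) = ∫ x in (0:ℝ)..(π / 2), f x := by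
    rw [intervalIntegral.integral_of_le (by positivity), hμ]
    exact setIntegral_congr_fun measurableSet_Ioc hSS1
  rw [hcG, hid] at hhs
  have hlim1 : Tendsto (fun N : ℕ => ∑ k ∈ Finset.range N, c k) atTop
      (nhds (∫ x in (0:ℝ)..(π / 2), f x)) := hhs.tendsto_sum_nat
  have hlim2 : Tendsto (fun N : ℕ => ∑ k ∈ Finset.range N, c k) atTop (nhds I) := by
    have hNat : Tendsto (fun N : ℕ => (N : ℝ) * π) atTop atTop :=
      tendsto_natCast_atTop_atTop.atTop_mul_const hpi
    exact ((hIF.comp hNat).congr fun N => hstep1 N)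
  exact tendsto_nhds_unique hlim2 hlim1
end

section
/- Let f : ℝ → ℝ be a continuous function satisfying f(x + π) = f(x) and f(π − x) = f(x) for all x ≥ 0. Then the improper integral ∫₀^∞ (sin x / x) f(x) dx exists and equals ∫₀^{π/2} f(x) dx, i.e. the limit as T → ∞ of ∫₀^T (sin x / x) f(x) dx equals ∫₀^{π/2} f(x) dx. -/
open Real Filter MeasureTheory intervalIntegral

open Set

section SinDivAux

lemma rpow_integrableOn {a : ℝ} (ha : 0 < a) :
    IntegrableOn (fun u : ℝ => u ^ (a - 1)) (Ioo 0 1) := by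
  have h : IntervalIntegrable (fun u : ℝ => u ^ (a - 1)) volume 0 1 :=
    intervalIntegral.intervalIntegrable_rpow' (by linarith)
  rw [intervalIntegrable_iff, uIoc_of_le (by norm_num : (0:ℝ) ≤ 1)] at h
  exact h.mono_set Ioo_subset_Ioc_self

lemma rpow_integral_Ioo {a : ℝ} (ha : 0 < a) :
    ∫ u in Ioo (0:ℝ) 1, u ^ (a - 1) = 1 / a := by
  have h : ∫ u in (0:ℝ)..1, u ^ (a - 1) = 1 / a := by
    rw [integral_rpow (Or.inl (by linarith))]
    rw [sub_add_cancel, Real.one_rpow, Real.zero_rpow (ne_of_gt ha)]; ring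
  rw [intervalIntegral.integral_of_le (by norm_num : (0:ℝ) ≤ 1),
    MeasureTheory.integral_Ioc_eq_integral_Ioo] at h
  exact h

-- integrability of the Beta integrand
lemma beta_integrableOn {s : ℝ} (h0 : 0 < s) (h1 : s < 1) :
    IntegrableOn (fun x : ℝ => x ^ (s - 1) * (1 - x) ^ (-s)) (Ioo 0 1) := by
  have hc : IntervalIntegrable
      (fun x : ℝ => (x : ℂ) ^ ((s : ℂ) - 1) * (1 - (x : ℂ)) ^ (((1 - s : ℝ) : ℂ) - 1))
      volume 0 1 :=
    Complex.betaIntegral_convergent (by simpa using h0) (by simp; linarith)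
  rw [intervalIntegrable_iff, uIoc_of_le (by norm_num : (0:ℝ) ≤ 1)] at hc
  have hc2 : IntegrableOn
      (fun x : ℝ => (x : ℂ) ^ ((s : ℂ) - 1) * (1 - (x : ℂ)) ^ (((1 - s : ℝ) : ℂ) - 1))
      (Ioo 0 1) := hc.mono_set Ioo_subset_Ioc_self
  have := hc2.re
  apply (integrableOn_congr_fun _ measurableSet_Ioo).mp this
  intro x hx
  obtain ⟨hx0, hx1⟩ := hx
  have e1 : ((x:ℝ) : ℂ) ^ ((s : ℂ) - 1) = ((x ^ (s-1) : ℝ) : ℂ) := by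
    rw [Complex.ofReal_cpow hx0.le]; push_cast; ring_nf
  have e2 : (1 - (x : ℂ)) ^ (((1 - s : ℝ) : ℂ) - 1) = (((1-x) ^ (-s) : ℝ) : ℂ) := by
    have : (1 - (x:ℂ)) = (((1 - x : ℝ)) : ℂ) := by push_cast; ring
    rw [this, Complex.ofReal_cpow (by linarith)]; push_cast; ring_nf
  simp only [e1, e2, ← Complex.ofReal_mul]; exact Complex.ofReal_re _

lemma beta_value {s : ℝ} (h0 : 0 < s) (h1 : s < 1) :
    ∫ x in Ioo (0:ℝ) 1, x ^ (s - 1) * (1 - x) ^ (-s) = π / Real.sin (π * s) := by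
  have key : Complex.Gamma s * Complex.Gamma (1 - s) =
      Complex.betaIntegral s (1 - s) := by
    have := Complex.Gamma_mul_Gamma_eq_betaIntegral (s := (s:ℂ)) (t := 1 - (s:ℂ))
      (by simpa using h0) (by simp; linarith)
    rwa [add_sub_cancel, Complex.Gamma_one, one_mul] at this
  have hrefl := Complex.Gamma_mul_Gamma_one_sub (s : ℂ)
  rw [key] at hrefl
  -- rewrite the beta integral as a real integral
  have hcongr : Complex.betaIntegral s (1 - s) =
      ((∫ x in (0:ℝ)..1, x ^ (s - 1) * (1 - x) ^ (-s) : ℝ) : ℂ) := by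
    rw [Complex.betaIntegral, ← intervalIntegral.integral_ofReal]
    apply intervalIntegral.integral_congr
    intro x hx
    rw [uIcc_of_le (by norm_num : (0:ℝ) ≤ 1)] at hx
    obtain ⟨hx0, hx1⟩ := hx
    have e1 : ((x:ℝ) : ℂ) ^ ((s : ℂ) - 1) = ((x ^ (s-1) : ℝ) : ℂ) := by
      rw [Complex.ofReal_cpow hx0]; push_cast; ring_nf
    have e2 : (1 - (x : ℂ)) ^ ((1 - (s:ℂ)) - 1) = (((1-x) ^ (-s) : ℝ) : ℂ) := by
      have h : (1 - (x:ℂ)) = (((1 - x : ℝ)) : ℂ) := by push_cast; ring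
      rw [h, Complex.ofReal_cpow (by linarith)]; push_cast; ring_nf
    simp only [Complex.ofReal_mul, e1, e2]
  rw [hcongr] at hrefl
  have hrhs : ((π : ℂ)) / Complex.sin (π * s) = ((π / Real.sin (π * s) : ℝ) : ℂ) := by
    push_cast [Complex.ofReal_sin]
    norm_num
  rw [hrhs] at hrefl
  have := Complex.ofReal_inj.mp hrefl
  rw [← this, intervalIntegral.integral_of_le (by norm_num : (0:ℝ) ≤ 1),
    MeasureTheory.integral_Ioc_eq_integral_Ioo]

lemma cov_half (σ : ℝ) :
    ∫ u in Ioo (0:ℝ) 1, u ^ (σ - 1) / (1 + u)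
      = ∫ x in Ioo (0:ℝ) (1/2), x ^ (σ - 1) * (1 - x) ^ (-σ) := by
  have himg : (fun x : ℝ => x / (1 - x)) '' Ioo 0 (1/2) = Ioo 0 1 := by
    ext u
    constructor
    · rintro ⟨x, ⟨hx0, hx⟩, rfl⟩
      have hb : 0 < 1 - x := by linarith
      exact ⟨div_pos hx0 hb, (div_lt_one hb).mpr (by linarith)⟩
    · rintro ⟨hu0, hu1⟩
      refine ⟨u / (1 + u), ⟨div_pos hu0 (by linarith), ?_⟩, ?_⟩
      · rw [div_lt_iff₀ (by linarith)]; linarith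
      · have h1u : (1:ℝ) + u ≠ 0 := by positivity
        field_simp
        ring
  have hderiv : ∀ x ∈ Ioo (0:ℝ) (1/2), HasDerivWithinAt (fun x : ℝ => x / (1 - x))
      (((1 - x) ^ 2)⁻¹) (Ioo 0 (1/2)) x := by
    intro x hx
    have hb : (1:ℝ) - x ≠ 0 := by have := hx.2; intro h; rw [sub_eq_zero] at h; rw [← h] at this; norm_num at this
    have : HasDerivAt (fun x : ℝ => x / (1 - x))
        ((1 * (1 - x) - x * (0 - 1)) / (1 - x) ^ 2) x :=
      (hasDerivAt_id x).div ((hasDerivAt_const x 1).sub (hasDerivAt_id x)) hb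
    have h2 : (1 * (1 - x) - x * (0 - 1)) / (1 - x) ^ 2 = ((1 - x) ^ 2)⁻¹ := by
      field_simp
      ring
    rw [h2] at this
    exact this.hasDerivWithinAt
  have hinj : InjOn (fun x : ℝ => x / (1 - x)) (Ioo 0 (1/2)) := by
    intro x hx y hy hxy
    have hbx : (1:ℝ) - x ≠ 0 := by have := hx.2; intro h; rw [sub_eq_zero] at h; rw [← h] at this; norm_num at this
    have hby : (1:ℝ) - y ≠ 0 := by have := hy.2; intro h; rw [sub_eq_zero] at h; rw [← h] at this; norm_num at this
    field_simp at hxy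
    linarith
  rw [← himg, MeasureTheory.integral_image_eq_integral_abs_deriv_smul measurableSet_Ioo
    hderiv hinj]
  apply MeasureTheory.setIntegral_congr_fun measurableSet_Ioo
  intro x hx
  obtain ⟨hx0, hxh⟩ := hx
  have hb : (0:ℝ) < 1 - x := by linarith
  have h1 : 1 + x / (1 - x) = (1 - x)⁻¹ := by field_simp; ring
  have hbσ : (0:ℝ) < (1 - x) ^ σ := Real.rpow_pos_of_pos hb σ
  simp only [smul_eq_mul, h1]
  rw [Real.div_rpow hx0.le hb.le, abs_of_pos (by positivity),
    Real.rpow_neg hb.le, Real.rpow_sub hb, Real.rpow_one]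
  field_simp

lemma reflect_half {s : ℝ} :
    ∫ x in Ioo (0:ℝ) (1/2), x ^ (-s) * (1 - x) ^ (s - 1)
      = ∫ x in Ioo (1/2 : ℝ) 1, x ^ (s - 1) * (1 - x) ^ (-s) := by
  have himg : (fun x : ℝ => 1 - x) '' Ioo (1/2) 1 = Ioo 0 (1/2) := by
    ext u
    constructor
    · rintro ⟨x, ⟨hx0, hx1⟩, rfl⟩; exact ⟨by simp; linarith, by simp; linarith⟩
    · rintro ⟨hu0, hu1⟩; exact ⟨1 - u, ⟨by linarith, by linarith⟩, by ring⟩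
  have hderiv : ∀ x ∈ Ioo (1/2:ℝ) 1, HasDerivWithinAt (fun x : ℝ => 1 - x)
      (-1) (Ioo (1/2) 1) x := fun x _ =>
    (((hasDerivAt_const x 1).sub (hasDerivAt_id x)).hasDerivWithinAt).congr_deriv (by norm_num)
  have hinj : InjOn (fun x : ℝ => 1 - x) (Ioo (1/2:ℝ) 1) := fun x _ y _ h => by
    simpa [sub_eq_sub_iff_sub_eq_sub] using h
  rw [← himg, MeasureTheory.integral_image_eq_integral_abs_deriv_smul measurableSet_Ioo
    hderiv hinj]
  apply MeasureTheory.setIntegral_congr_fun measurableSet_Ioo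
  intro x _
  simp only [smul_eq_mul, abs_neg, abs_one, one_mul, sub_sub_cancel]
  ring

lemma join_half {s : ℝ} (h0 : 0 < s) (h1 : s < 1) :
    (∫ x in Ioo (0:ℝ) (1/2), x ^ (s - 1) * (1 - x) ^ (-s))
      + (∫ x in Ioo (1/2:ℝ) 1, x ^ (s - 1) * (1 - x) ^ (-s))
      = ∫ x in Ioo (0:ℝ) 1, x ^ (s - 1) * (1 - x) ^ (-s) := by
  have hu : Ioo (0:ℝ) (1/2) ∪ Ico (1/2:ℝ) 1 = Ioo 0 1 :=
    Set.Ioo_union_Ico_eq_Ioo (by norm_num) (by norm_num)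
  have hint := beta_integrableOn h0 h1
  rw [← hu, MeasureTheory.setIntegral_union (by apply Set.disjoint_left.mpr; rintro x ⟨_, h⟩ ⟨h2, _⟩; linarith) measurableSet_Ico
    (hint.mono_set (by rw [← hu]; exact subset_union_left))
    (hint.mono_set (by rw [← hu]; exact subset_union_right)),
    MeasureTheory.integral_Ico_eq_integral_Ioo]

lemma J_add {s : ℝ} (h0 : 0 < s) (h1 : s < 1) :
    (∫ u in Ioo (0:ℝ) 1, u ^ (s - 1) / (1 + u))
      + (∫ u in Ioo (0:ℝ) 1, u ^ ((1 - s) - 1) / (1 + u)) = π / Real.sin (π * s) := by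
  rw [cov_half s, cov_half (1 - s)]
  have : (fun x : ℝ => x ^ ((1 - s) - 1) * (1 - x) ^ (-(1 - s)))
      = fun x : ℝ => x ^ (-s) * (1 - x) ^ (s - 1) := by
    funext x; rw [show (1 - s) - 1 = -s by ring, show -(1 - s) = s - 1 by ring]
  rw [this, reflect_half, join_half h0 h1, beta_value h0 h1]

lemma aux_integrable {σ : ℝ} (h0 : 0 < σ) {g : ℝ → ℝ} (hg : ContinuousOn g (Ioo 0 1))
    (hbd : ∀ u ∈ Ioo (0:ℝ) 1, |g u| ≤ 2) :
    IntegrableOn (fun u : ℝ => u ^ (σ - 1) * g u) (Ioo 0 1) := by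
  apply Integrable.mono' ((rpow_integrableOn h0).const_mul 2)
  · apply ContinuousOn.aestronglyMeasurable _ measurableSet_Ioo
    exact (ContinuousOn.rpow_const continuousOn_id (fun u hu => Or.inl (ne_of_gt hu.1))).mul hg
  · filter_upwards [ae_restrict_mem measurableSet_Ioo] with u hu
    have h1 : (0:ℝ) < u ^ (σ - 1) := Real.rpow_pos_of_pos hu.1 _
    rw [norm_eq_abs, abs_mul, abs_of_pos h1]
    calc u ^ (σ - 1) * |g u| ≤ u ^ (σ - 1) * 2 := by
          exact mul_le_mul_of_nonneg_left (hbd u hu) h1.le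
      _ = 2 * u ^ (σ - 1) := by ring

lemma cont_inv_one_add : ContinuousOn (fun u : ℝ => 1 / (1 + u)) (Ioo 0 1) := by
  apply ContinuousOn.div continuousOn_const (continuousOn_const.add continuousOn_id)
  intro u hu; have := hu.1; show (1:ℝ) + u ≠ 0; positivity

lemma bd_inv_one_add : ∀ u ∈ Ioo (0:ℝ) 1, |1 / (1 + u)| ≤ 2 := by
  intro u hu
  rw [abs_of_pos (by have := hu.1; positivity)]
  rw [div_le_iff₀ (by have := hu.1 ; positivity)]
  nlinarith [hu.1]

lemma geom_rep {σ : ℝ} (h0 : 0 < σ) (n : ℕ) :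
    ∑ k ∈ Finset.range n, (-1:ℝ)^k / (σ + k)
      = ∫ u in Ioo (0:ℝ) 1, u ^ (σ - 1) * ((1 - (-u)^n) / (1 + u)) := by
  have hpt : ∀ u ∈ Ioo (0:ℝ) 1, u ^ (σ - 1) * ((1 - (-u)^n) / (1 + u))
      = ∑ k ∈ Finset.range n, (-1:ℝ)^k * u ^ ((σ + k) - 1) := by
    intro u hu
    obtain ⟨hu0, hu1⟩ := hu
    have hne : (-u : ℝ) ≠ 1 := by intro h; linarith
    have hgeom : ∑ k ∈ Finset.range n, (-u:ℝ)^k = (1 - (-u)^n) / (1 + u) := by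
      rw [geom_sum_eq hne]
      have h1 : (-u:ℝ) - 1 ≠ 0 := by intro h; apply hne; linarith
      have h2 : (1:ℝ) + u ≠ 0 := by positivity
      field_simp
      ring
    rw [← hgeom, Finset.mul_sum]
    apply Finset.sum_congr rfl
    intro k _
    rw [neg_pow, show σ + (k:ℝ) - 1 = (σ - 1) + (k:ℝ) by ring, Real.rpow_add hu0,
      Real.rpow_natCast]
    ring
  rw [MeasureTheory.setIntegral_congr_fun measurableSet_Ioo hpt,
    MeasureTheory.integral_finset_sum]
  · apply Finset.sum_congr rfl
    intro k _
    rw [MeasureTheory.integral_const_mul, rpow_integral_Ioo (by positivity)]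
    ring
  · intro k _
    exact (rpow_integrableOn (a := σ + k) (by positivity)).const_mul _

lemma partial_nonneg {σ : ℝ} (h0 : 0 < σ) (n : ℕ) :
    0 ≤ ∑ k ∈ Finset.range n, (-1:ℝ)^k / (σ + k) := by
  rw [geom_rep h0 n]
  apply MeasureTheory.setIntegral_nonneg measurableSet_Ioo
  intro u hu
  obtain ⟨hu0, hu1⟩ := hu
  have h1 : (0:ℝ) ≤ u ^ (σ - 1) := (Real.rpow_pos_of_pos hu0 _).le
  have h2 : |(-u:ℝ)^n| ≤ 1 := by
    rw [abs_pow, abs_neg, abs_of_pos hu0]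
    exact pow_le_one₀ hu0.le hu1.le
  have h3 : (0:ℝ) ≤ 1 - (-u)^n := by
    have := abs_le.mp h2; linarith [this.2]
  positivity

lemma partial_le {σ : ℝ} (h0 : 0 < σ) (n : ℕ) :
    ∑ k ∈ Finset.range n, (-1:ℝ)^k / (σ + k) ≤ 2 / σ := by
  rw [geom_rep h0 n]
  have hint1 : IntegrableOn (fun u : ℝ => u ^ (σ - 1) * ((1 - (-u)^n) / (1 + u)))
      (Ioo 0 1) := by
    apply aux_integrable h0
    · apply ContinuousOn.div ((continuousOn_const).sub
        (((continuousOn_id.neg).pow n)))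
        (continuousOn_const.add continuousOn_id)
      intro u hu; have := hu.1; show (1:ℝ) + u ≠ 0; positivity
    · intro u hu
      obtain ⟨hu0, hu1⟩ := hu
      have h2 : |(-u:ℝ)^n| ≤ 1 := by
        rw [abs_pow, abs_neg, abs_of_pos hu0]
        exact pow_le_one₀ hu0.le hu1.le
      have := abs_le.mp h2
      rw [abs_div, abs_of_nonneg (by linarith [this.2] : (0:ℝ) ≤ 1 - (-u)^n),
        abs_of_pos (by positivity : (0:ℝ) < 1 + u), div_le_iff₀ (by positivity)]
      nlinarith [this.1]
  have hint2 : IntegrableOn (fun u : ℝ => 2 * u ^ (σ - 1)) (Ioo 0 1) :=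
    (rpow_integrableOn h0).const_mul 2
  calc ∫ u in Ioo (0:ℝ) 1, u ^ (σ - 1) * ((1 - (-u)^n) / (1 + u))
      ≤ ∫ u in Ioo (0:ℝ) 1, 2 * u ^ (σ - 1) := by
        apply MeasureTheory.setIntegral_mono_on hint1 hint2 measurableSet_Ioo
        intro u hu
        obtain ⟨hu0, hu1⟩ := hu
        have h1 : (0:ℝ) < u ^ (σ - 1) := Real.rpow_pos_of_pos hu0 _
        have h2 : |(-u:ℝ)^n| ≤ 1 := by
          rw [abs_pow, abs_neg, abs_of_pos hu0]
          exact pow_le_one₀ hu0.le hu1.le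
        have h3 := abs_le.mp h2
        rw [mul_comm (2:ℝ)]
        apply mul_le_mul_of_nonneg_left _ h1.le
        rw [div_le_iff₀ (by positivity)]
        nlinarith [h3.1]
    _ = 2 * (1 / σ) := by rw [MeasureTheory.integral_const_mul, rpow_integral_Ioo h0]
    _ = 2 / σ := by ring

lemma tendsto_partial {σ : ℝ} (h0 : 0 < σ) :
    Tendsto (fun n : ℕ => ∑ k ∈ Finset.range n, (-1:ℝ)^k / (σ + k)) atTop
      (nhds (∫ u in Ioo (0:ℝ) 1, u ^ (σ - 1) / (1 + u))) := by
  have hJint : IntegrableOn (fun u : ℝ => u ^ (σ - 1) / (1 + u)) (Ioo 0 1) := by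
    have := aux_integrable h0 cont_inv_one_add bd_inv_one_add
    apply (integrableOn_congr_fun _ measurableSet_Ioo).mp this
    intro u _; simp only [mul_one_div]
  have hRint : ∀ n : ℕ, IntegrableOn (fun u : ℝ => u ^ (σ - 1) * ((-u)^n / (1 + u)))
      (Ioo 0 1) := by
    intro n
    apply aux_integrable h0
    · apply ContinuousOn.div ((continuousOn_id.neg).pow n)
        (continuousOn_const.add continuousOn_id)
      intro u hu; have := hu.1; show (1:ℝ) + u ≠ 0; positivity
    · intro u hu
      obtain ⟨hu0, hu1⟩ := hu
      rw [abs_div, abs_pow, abs_neg, abs_of_pos hu0, abs_of_pos (by positivity)]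
      rw [div_le_iff₀ (by positivity)]
      calc u ^ n ≤ 1 := pow_le_one₀ hu0.le hu1.le
        _ ≤ 2 * (1 + u) := by linarith
  have hsplit : ∀ n : ℕ, ∑ k ∈ Finset.range n, (-1:ℝ)^k / (σ + k)
      = (∫ u in Ioo (0:ℝ) 1, u ^ (σ - 1) / (1 + u))
        - ∫ u in Ioo (0:ℝ) 1, u ^ (σ - 1) * ((-u)^n / (1 + u)) := by
    intro n
    rw [geom_rep h0 n, ← MeasureTheory.integral_sub hJint (hRint n)]
    apply MeasureTheory.setIntegral_congr_fun measurableSet_Ioo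
    intro u _
    simp only [sub_div, mul_sub, mul_one_div]
  have hR0 : Tendsto (fun n : ℕ => ∫ u in Ioo (0:ℝ) 1, u ^ (σ - 1) * ((-u)^n / (1 + u)))
      atTop (nhds 0) := by
    apply squeeze_zero_norm (a := fun n : ℕ => 1 / (σ + (n:ℝ)))
    · intro n
      rw [← rpow_integral_Ioo (a := σ + n) (by positivity)]
      apply MeasureTheory.norm_integral_le_of_norm_le (rpow_integrableOn (by positivity))
      filter_upwards [ae_restrict_mem measurableSet_Ioo] with u hu
      obtain ⟨hu0, hu1⟩ := hu
      rw [norm_eq_abs, abs_mul, abs_of_pos (Real.rpow_pos_of_pos hu0 _), abs_div,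
        abs_pow, abs_neg, abs_of_pos hu0, abs_of_pos (by positivity : (0:ℝ) < 1 + u)]
      calc u ^ (σ - 1) * (u ^ n / (1 + u)) ≤ u ^ (σ - 1) * u ^ n := by
            apply mul_le_mul_of_nonneg_left _ (Real.rpow_pos_of_pos hu0 _).le
            rw [div_le_iff₀ (by positivity)]
            nlinarith [pow_nonneg hu0.le n]
        _ = u ^ (σ + n - 1) := by
            rw [← Real.rpow_natCast u n, ← Real.rpow_add hu0]; ring_nf
    · apply Tendsto.div_atTop tendsto_const_nhds
      exact tendsto_atTop_add_const_left _ σ tendsto_natCast_atTop_atTop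
  have := (tendsto_const_nhds (x := ∫ u in Ioo (0:ℝ) 1, u ^ (σ - 1) / (1 + u))
    (f := atTop (α := ℕ))).sub hR0
  rw [sub_zero] at this
  exact this.congr (fun n => (hsplit n).symm)

lemma S_eq {t : ℝ} (ht : 0 < t) (n : ℕ) :
    ∑ k ∈ Finset.range n, (-1:ℝ)^k / (t + k * π)
      = (1/π) * ∑ k ∈ Finset.range n, (-1:ℝ)^k / (t/π + k) := by
  rw [Finset.mul_sum]
  apply Finset.sum_congr rfl
  intro k _
  have hπ : (0:ℝ) < π := Real.pi_pos
  have hk : t/π + k ≠ 0 := by positivity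
  have h1 : t + k * π = π * (t/π + k) := by field_simp
  rw [h1, div_mul_eq_div_div_swap]
  ring

lemma S_nonneg {t : ℝ} (ht : 0 < t) (n : ℕ) :
    0 ≤ ∑ k ∈ Finset.range n, (-1:ℝ)^k / (t + k * π) := by
  rw [S_eq ht n]
  have hπ : (0:ℝ) < π := Real.pi_pos
  have := partial_nonneg (σ := t/π) (by positivity) n
  positivity

lemma S_le {t : ℝ} (ht : 0 < t) (n : ℕ) :
    ∑ k ∈ Finset.range n, (-1:ℝ)^k / (t + k * π) ≤ 2 / t := by
  rw [S_eq ht n]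
  have hπ : (0:ℝ) < π := Real.pi_pos
  have h := partial_le (σ := t/π) (by positivity) n
  calc (1/π) * ∑ k ∈ Finset.range n, (-1:ℝ)^k / (t/π + k)
      ≤ (1/π) * (2 / (t/π)) := by
        apply mul_le_mul_of_nonneg_left h (by positivity)
    _ = 2 / t := by field_simp
  
lemma key_tendsto {t : ℝ} (ht0 : 0 < t) (htp : t < π) :
    Tendsto (fun n : ℕ => (∑ k ∈ Finset.range n, (-1:ℝ)^k / (t + k * π))
      + ∑ k ∈ Finset.range n, (-1:ℝ)^k / ((π - t) + k * π)) atTop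
      (nhds (1 / Real.sin t)) := by
  have hπ : (0:ℝ) < π := Real.pi_pos
  set s := t / π with hs
  have hs0 : 0 < s := by positivity
  have hs1 : s < 1 := (div_lt_one hπ).mpr htp
  have h1s : (π - t) / π = 1 - s := by rw [hs]; field_simp
  have h1 := tendsto_partial hs0
  have h2 := tendsto_partial (σ := 1 - s) (by linarith)
  have hsum := (h1.add h2).const_mul (1/π)
  have hval : (1/π) * ((∫ u in Ioo (0:ℝ) 1, u ^ (s - 1) / (1 + u))
      + ∫ u in Ioo (0:ℝ) 1, u ^ ((1 - s) - 1) / (1 + u)) = 1 / Real.sin t := by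
    rw [J_add hs0 hs1]
    have hsin : Real.sin (π * s) = Real.sin t := by
      congr 1; rw [hs]; field_simp
    rw [hsin]
    have : Real.sin t ≠ 0 := (Real.sin_pos_of_pos_of_lt_pi ht0 htp).ne'
    field_simp
  rw [hval] at hsum
  apply hsum.congr
  intro n
  rw [S_eq ht0 n, S_eq (show (0:ℝ) < π - t by linarith) n, h1s]
  ring

lemma f_shift (f : ℝ → ℝ) (hper : ∀ x : ℝ, 0 ≤ x → f (x + π) = f x) (k : ℕ) :
    ∀ t : ℝ, 0 ≤ t → f (t + k * π) = f t := by
  induction k with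
  | zero => simp
  | succ k ih =>
    intro t ht
    have h : t + ((k:ℕ)+1 : ℕ) * π = (t + k * π) + π := by push_cast; ring
    rw [h, hper _ (by positivity), ih t ht]

lemma global_bound (f : ℝ → ℝ) (hf : Continuous f)
    (hper : ∀ x : ℝ, 0 ≤ x → f (x + π) = f x) :
    ∃ M : ℝ, 0 ≤ M ∧ ∀ x : ℝ, 0 ≤ x → |f x| ≤ M := by
  obtain ⟨M, hM⟩ := (isCompact_Icc (a := (0:ℝ)) (b := π)).exists_bound_of_continuousOn
    hf.continuousOn
  refine ⟨max M 0, le_max_right _ _, ?_⟩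
  intro x hx
  have hπ : (0:ℝ) < π := Real.pi_pos
  set n := ⌊x / π⌋₊ with hn
  have h1 : (n:ℝ) * π ≤ x := by
    have := Nat.floor_le (div_nonneg hx hπ.le)
    rw [← hn] at this
    calc (n:ℝ) * π ≤ (x/π) * π := by nlinarith
      _ = x := by field_simp
  have h2 : x < ((n:ℝ) + 1) * π := by
    have := Nat.lt_floor_add_one (x / π)
    rw [← hn] at this
    calc x = (x/π) * π := by field_simp
      _ < ((n:ℝ) + 1) * π := by nlinarith
  have hmem : x - (n:ℝ) * π ∈ Icc (0:ℝ) π := ⟨by linarith, by linarith⟩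
  have hfs := f_shift f hper n (x - (n:ℝ) * π) hmem.1
  rw [sub_add_cancel] at hfs
  rw [hfs]
  exact le_trans (hM _ hmem) (le_max_left _ _)

lemma intInt (f : ℝ → ℝ) (hf : Continuous f) (a b : ℝ) :
    IntervalIntegrable (fun x : ℝ => Real.sin x / x * f x) volume a b := by
  rw [intervalIntegrable_iff]
  obtain ⟨C, hC⟩ := (isCompact_uIcc (a := a) (b := b)).exists_bound_of_continuousOn
    hf.continuousOn
  apply Integrable.mono' (g := fun _ => max C 0)
    (integrableOn_const measure_Ioc_lt_top.ne)
  · exact (((Real.continuous_sin.measurable.div measurable_id).mul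
      hf.measurable).aestronglyMeasurable)
  · filter_upwards [ae_restrict_mem measurableSet_Ioc] with x hx
    have hx' : x ∈ uIcc a b := uIoc_subset_uIcc hx
    have h1 : |Real.sin x / x| ≤ 1 := by
      rcases eq_or_ne x 0 with h | h
      · simp [h]
      · rw [abs_div, div_le_one (abs_pos.mpr h)]
        exact Real.abs_sin_le_abs
    calc ‖Real.sin x / x * f x‖ = |Real.sin x / x| * |f x| := abs_mul _ _
      _ ≤ 1 * C := mul_le_mul h1 (hC x hx') (abs_nonneg _) zero_le_one
      _ ≤ max C 0 := by simp

-- integrability of a single term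
lemma term_int (f : ℝ → ℝ) (hf : Continuous f) (k : ℕ) :
    IntegrableOn (fun t : ℝ => (-1:ℝ)^k * (Real.sin t * f t / (t + k * π)))
      (Ioo 0 π) := by
  apply Integrable.mono' (g := fun t => |f t|)
    ((hf.abs.integrableOn_Icc (a := 0) (b := π)).mono_set Ioo_subset_Icc_self)
  · exact ((((Real.continuous_sin.mul hf).measurable).div
      (measurable_id.add_const _)).const_mul _).aestronglyMeasurable
  · filter_upwards [ae_restrict_mem measurableSet_Ioo] with t ht
    obtain ⟨ht0, htp⟩ := ht
    have hd : (0:ℝ) < t + k * π := by positivity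
    rw [norm_eq_abs, abs_mul, abs_pow, abs_neg, abs_one, one_pow, one_mul, abs_div,
      abs_of_pos hd, abs_mul]
    rw [div_le_iff₀ hd]
    have hs : |Real.sin t| ≤ t := by
      have := Real.abs_sin_le_abs (x := t); rwa [abs_of_pos ht0] at this
    have h1 : |Real.sin t| * |f t| ≤ t * |f t| :=
      mul_le_mul_of_nonneg_right hs (abs_nonneg _)
    nlinarith [abs_nonneg (f t), mul_nonneg (by positivity : (0:ℝ) ≤ (k:ℝ)*π) (abs_nonneg (f t))]

-- integrability of a single reflected term
lemma term_int' (f : ℝ → ℝ) (hf : Continuous f) (k : ℕ) :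
    IntegrableOn (fun t : ℝ => (-1:ℝ)^k * (Real.sin t * f t / ((π - t) + k * π)))
      (Ioo 0 π) := by
  apply Integrable.mono' (g := fun t => |f t|)
    ((hf.abs.integrableOn_Icc (a := 0) (b := π)).mono_set Ioo_subset_Icc_self)
  · exact ((((Real.continuous_sin.mul hf).measurable).div
      ((measurable_const.sub measurable_id).add_const _)).const_mul _).aestronglyMeasurable
  · filter_upwards [ae_restrict_mem measurableSet_Ioo] with t ht
    obtain ⟨ht0, htp⟩ := ht
    have hd : (0:ℝ) < (π - t) + k * π := by
      have : (0:ℝ) < π - t := by linarith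
      positivity
    rw [norm_eq_abs, abs_mul, abs_pow, abs_neg, abs_one, one_pow, one_mul, abs_div,
      abs_of_pos hd, abs_mul]
    rw [div_le_iff₀ hd]
    have hs : |Real.sin t| ≤ π - t := by
      have h := Real.abs_sin_le_abs (x := π - t)
      rw [Real.sin_pi_sub] at h
      rwa [abs_of_pos (by linarith : (0:ℝ) < π - t)] at h
    have h1 : |Real.sin t| * |f t| ≤ (π - t) * |f t| :=
      mul_le_mul_of_nonneg_right hs (abs_nonneg _)
    nlinarith [abs_nonneg (f t), mul_nonneg (by positivity : (0:ℝ) ≤ (k:ℝ)*π) (abs_nonneg (f t))]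

-- Step B: the integral over [0, nπ] as an integral over (0, π)
lemma step_B (f : ℝ → ℝ) (hf : Continuous f)
    (hper : ∀ x : ℝ, 0 ≤ x → f (x + π) = f x) (n : ℕ) :
    ∫ x in (0:ℝ)..((n:ℝ) * π), Real.sin x / x * f x
      = ∫ t in Ioo (0:ℝ) π, Real.sin t * f t
          * (∑ k ∈ Finset.range n, (-1:ℝ)^k / (t + k * π)) := by
  have hπ : (0:ℝ) < π := Real.pi_pos
  -- split into blocks
  have hsplit : ∀ m : ℕ, ∫ x in (0:ℝ)..((m:ℝ) * π), Real.sin x / x * f x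
      = ∑ k ∈ Finset.range m,
          ∫ x in ((k:ℝ) * π)..(((k:ℝ)+1) * π), Real.sin x / x * f x := by
    intro m
    induction m with
    | zero => simp
    | succ m ih =>
      rw [Finset.sum_range_succ, ← ih,
        intervalIntegral.integral_add_adjacent_intervals
          (intInt f hf 0 ((m:ℝ)*π)) (intInt f hf ((m:ℝ)*π) (((m:ℝ)+1)*π))]
      push_cast
      ring_nf
  -- identify each block
  have hblock : ∀ k : ℕ, ∫ x in ((k:ℝ) * π)..(((k:ℝ)+1) * π), Real.sin x / x * f x
      = ∫ t in Ioo (0:ℝ) π, (-1:ℝ)^k * (Real.sin t * f t / (t + k * π)) := by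
    intro k
    have hshift := intervalIntegral.integral_comp_add_right
      (a := (0:ℝ)) (b := π) (fun x => Real.sin x / x * f x) ((k:ℝ) * π)
    rw [zero_add] at hshift
    have hend : π + (k:ℝ) * π = ((k:ℝ)+1) * π := by ring
    rw [hend] at hshift
    rw [← hshift]
    have hcongr : ∫ t in (0:ℝ)..π, Real.sin (t + (k:ℝ)*π) / (t + (k:ℝ)*π) * f (t + (k:ℝ)*π)
        = ∫ t in (0:ℝ)..π, (-1:ℝ)^k * (Real.sin t * f t / (t + k * π)) := by
      apply intervalIntegral.integral_congr
      intro t ht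
      rw [uIcc_of_le hπ.le] at ht
      have hfs := f_shift f hper k t ht.1
      simp only [Real.sin_add_nat_mul_pi, hfs]
      ring
    rw [hcongr, intervalIntegral.integral_of_le hπ.le,
      MeasureTheory.integral_Ioc_eq_integral_Ioo]
  rw [hsplit n]
  have : ∀ k ∈ Finset.range n, (∫ x in ((k:ℝ) * π)..(((k:ℝ)+1) * π), Real.sin x / x * f x)
      = ∫ t in Ioo (0:ℝ) π, (-1:ℝ)^k * (Real.sin t * f t / (t + k * π)) :=
    fun k _ => hblock k
  rw [Finset.sum_congr rfl this, ← MeasureTheory.integral_finset_sum _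
    (fun k _ => term_int f hf k)]
  apply MeasureTheory.setIntegral_congr_fun measurableSet_Ioo
  intro t _
  simp only [Finset.mul_sum]
  apply Finset.sum_congr rfl
  intro k _
  ring

lemma step_C (f : ℝ → ℝ) (hsym : ∀ x : ℝ, 0 ≤ x → f (π - x) = f x) (n : ℕ) :
    ∫ t in Ioo (0:ℝ) π, Real.sin t * f t
        * (∑ k ∈ Finset.range n, (-1:ℝ)^k / (t + k * π))
      = ∫ t in Ioo (0:ℝ) π, Real.sin t * f t
          * (∑ k ∈ Finset.range n, (-1:ℝ)^k / ((π - t) + k * π)) := by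
  have hπ : (0:ℝ) < π := Real.pi_pos
  have h := intervalIntegral.integral_comp_sub_left (a := (0:ℝ)) (b := π)
    (fun t => Real.sin t * f t
      * (∑ k ∈ Finset.range n, (-1:ℝ)^k / (t + k * π))) π
  rw [sub_self, sub_zero] at h
  have hcongr : ∫ t in (0:ℝ)..π, (Real.sin (π - t) * f (π - t)
        * (∑ k ∈ Finset.range n, (-1:ℝ)^k / ((π - t) + k * π)))
      = ∫ t in (0:ℝ)..π, Real.sin t * f t
          * (∑ k ∈ Finset.range n, (-1:ℝ)^k / ((π - t) + k * π)) := by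
    apply intervalIntegral.integral_congr
    intro t ht
    rw [uIcc_of_le hπ.le] at ht
    simp only [Real.sin_pi_sub, hsym t ht.1]
  rw [hcongr] at h
  rw [← MeasureTheory.integral_Ioc_eq_integral_Ioo, ← intervalIntegral.integral_of_le hπ.le,
    ← MeasureTheory.integral_Ioc_eq_integral_Ioo (x := (0:ℝ)) (y := π),
    ← intervalIntegral.integral_of_le hπ.le]
  exact h.symm

lemma An_tendsto (f : ℝ → ℝ) (hf : Continuous f)
    (hper : ∀ x : ℝ, 0 ≤ x → f (x + π) = f x)
    (hsym : ∀ x : ℝ, 0 ≤ x → f (π - x) = f x) :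
    Tendsto (fun n : ℕ => ∫ x in (0:ℝ)..((n:ℝ) * π), Real.sin x / x * f x) atTop
      (nhds (∫ x in (0:ℝ)..(π/2), f x)) := by
  have hπ : (0:ℝ) < π := Real.pi_pos
  have hXint : ∀ n : ℕ, IntegrableOn (fun t : ℝ => Real.sin t * f t
      * (∑ k ∈ Finset.range n, (-1:ℝ)^k / (t + k * π))) (Ioo 0 π) := by
    intro n
    have h := MeasureTheory.integrable_finset_sum (μ := volume.restrict (Ioo 0 π))
      (Finset.range n) (fun k _ => term_int f hf k)
    have heq : (fun t : ℝ => ∑ k ∈ Finset.range n,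
          (-1:ℝ)^k * (Real.sin t * f t / (t + k * π)))
        = fun t : ℝ => Real.sin t * f t
            * (∑ k ∈ Finset.range n, (-1:ℝ)^k / (t + k * π)) := by
      funext t; simp only [Finset.mul_sum]; exact Finset.sum_congr rfl (fun k _ => by ring)
    rwa [heq] at h
  have hYint : ∀ n : ℕ, IntegrableOn (fun t : ℝ => Real.sin t * f t
      * (∑ k ∈ Finset.range n, (-1:ℝ)^k / ((π - t) + k * π))) (Ioo 0 π) := by
    intro n
    have h := MeasureTheory.integrable_finset_sum (μ := volume.restrict (Ioo 0 π))
      (Finset.range n) (fun k _ => term_int' f hf k)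
    have heq : (fun t : ℝ => ∑ k ∈ Finset.range n,
          (-1:ℝ)^k * (Real.sin t * f t / ((π - t) + k * π)))
        = fun t : ℝ => Real.sin t * f t
            * (∑ k ∈ Finset.range n, (-1:ℝ)^k / ((π - t) + k * π)) := by
      funext t; simp only [Finset.mul_sum]; exact Finset.sum_congr rfl (fun k _ => by ring)
    rwa [heq] at h
  have hAn : ∀ n : ℕ, ∫ x in (0:ℝ)..((n:ℝ) * π), Real.sin x / x * f x
      = ∫ t in Ioo (0:ℝ) π, Real.sin t * f t
          * (((∑ k ∈ Finset.range n, (-1:ℝ)^k / (t + k * π))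
            + ∑ k ∈ Finset.range n, (-1:ℝ)^k / ((π - t) + k * π)) / 2) := by
    intro n
    rw [step_B f hf hper n]
    have e2 := step_C f hsym n
    have e3 : (∫ t in Ioo (0:ℝ) π, Real.sin t * f t
          * (∑ k ∈ Finset.range n, (-1:ℝ)^k / (t + k * π)))
        = ((∫ t in Ioo (0:ℝ) π, Real.sin t * f t
            * (∑ k ∈ Finset.range n, (-1:ℝ)^k / (t + k * π)))
          + ∫ t in Ioo (0:ℝ) π, Real.sin t * f t
            * (∑ k ∈ Finset.range n, (-1:ℝ)^k / ((π - t) + k * π))) / 2 := by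
      rw [← e2]; ring
    rw [e3, ← MeasureTheory.integral_add (hXint n) (hYint n), ← MeasureTheory.integral_div]
    apply MeasureTheory.setIntegral_congr_fun measurableSet_Ioo
    intro t _
    simp only []
    ring
  have hmain : Tendsto (fun n : ℕ => ∫ t in Ioo (0:ℝ) π, Real.sin t * f t
      * (((∑ k ∈ Finset.range n, (-1:ℝ)^k / (t + k * π))
        + ∑ k ∈ Finset.range n, (-1:ℝ)^k / ((π - t) + k * π)) / 2)) atTop
      (nhds (∫ t in Ioo (0:ℝ) π, f t / 2)) := by
    apply MeasureTheory.tendsto_integral_of_dominated_convergence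
      (bound := fun t => 2 * |f t|)
    · intro n
      apply Measurable.aestronglyMeasurable
      apply ((Real.continuous_sin.mul hf).measurable).mul
      apply Measurable.div_const
      apply Measurable.add
      · exact Finset.measurable_sum _ (fun k _ =>
          measurable_const.div (measurable_id.add_const _))
      · exact Finset.measurable_sum _ (fun k _ =>
          measurable_const.div ((measurable_const.sub measurable_id).add_const _))
    · exact ((hf.abs.integrableOn_Icc (a := 0) (b := π)).mono_set
        Ioo_subset_Icc_self).const_mul 2
    · intro n
      filter_upwards [ae_restrict_mem measurableSet_Ioo] with t ht
      obtain ⟨ht0, htp⟩ := ht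
      have htp' : (0:ℝ) < π - t := by linarith
      have hsin0 : 0 ≤ Real.sin t := Real.sin_nonneg_of_nonneg_of_le_pi ht0.le htp.le
      have hsle : Real.sin t ≤ t := Real.sin_le ht0.le
      have hsle' : Real.sin t ≤ π - t := by
        have := Real.sin_le htp'.le
        rwa [Real.sin_pi_sub] at this
      have hb1 : Real.sin t * (∑ k ∈ Finset.range n, (-1:ℝ)^k / (t + k * π)) ≤ 2 := by
        calc Real.sin t * (∑ k ∈ Finset.range n, (-1:ℝ)^k / (t + k * π))
            ≤ Real.sin t * (2 / t) := mul_le_mul_of_nonneg_left (S_le ht0 n) hsin0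
          _ ≤ t * (2 / t) := mul_le_mul_of_nonneg_right hsle (by positivity)
          _ = 2 := by field_simp
      have hb1' : 0 ≤ Real.sin t * (∑ k ∈ Finset.range n, (-1:ℝ)^k / (t + k * π)) :=
        mul_nonneg hsin0 (S_nonneg ht0 n)
      have hb2 : Real.sin t * (∑ k ∈ Finset.range n, (-1:ℝ)^k / ((π - t) + k * π)) ≤ 2 := by
        calc Real.sin t * (∑ k ∈ Finset.range n, (-1:ℝ)^k / ((π - t) + k * π))
            ≤ Real.sin t * (2 / (π - t)) :=
              mul_le_mul_of_nonneg_left (S_le htp' n) hsin0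
          _ ≤ (π - t) * (2 / (π - t)) := mul_le_mul_of_nonneg_right hsle' (by positivity)
          _ = 2 := by field_simp
      have hb2' : 0 ≤ Real.sin t * (∑ k ∈ Finset.range n, (-1:ℝ)^k / ((π - t) + k * π)) :=
        mul_nonneg hsin0 (S_nonneg htp' n)
      have hrw : Real.sin t * f t
          * (((∑ k ∈ Finset.range n, (-1:ℝ)^k / (t + k * π))
            + ∑ k ∈ Finset.range n, (-1:ℝ)^k / ((π - t) + k * π)) / 2)
          = f t * ((Real.sin t * (∑ k ∈ Finset.range n, (-1:ℝ)^k / (t + k * π))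
            + Real.sin t * (∑ k ∈ Finset.range n, (-1:ℝ)^k / ((π - t) + k * π))) / 2) := by
        ring
      rw [norm_eq_abs, hrw, abs_mul]
      have habs : |(Real.sin t * (∑ k ∈ Finset.range n, (-1:ℝ)^k / (t + k * π))
          + Real.sin t * (∑ k ∈ Finset.range n, (-1:ℝ)^k / ((π - t) + k * π))) / 2| ≤ 2 := by
        rw [abs_div, abs_of_nonneg (by linarith), abs_of_pos (by norm_num : (0:ℝ) < 2)]
        rw [div_le_iff₀ (by norm_num : (0:ℝ) < 2)]
        linarith
      calc |f t| * _ ≤ |f t| * 2 := mul_le_mul_of_nonneg_left habs (abs_nonneg _)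
        _ = 2 * |f t| := by ring
    · filter_upwards [ae_restrict_mem measurableSet_Ioo] with t ht
      obtain ⟨ht0, htp⟩ := ht
      have hsin : Real.sin t ≠ 0 := (Real.sin_pos_of_pos_of_lt_pi ht0 htp).ne'
      have h := (key_tendsto ht0 htp).const_mul (Real.sin t * f t / 2)
      have hval : Real.sin t * f t / 2 * (1 / Real.sin t) = f t / 2 := by
        field_simp
      rw [hval] at h
      apply h.congr
      intro n
      ring
  rw [show (∫ t in Ioo (0:ℝ) π, f t / 2) = ∫ x in (0:ℝ)..(π/2), f x from ?_] at hmain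
  · exact hmain.congr (fun n => (hAn n).symm)
  · -- value identification
    have hii : IntervalIntegrable f volume 0 (π/2) := hf.intervalIntegrable _ _
    have hii2 : IntervalIntegrable f volume (π/2) π := hf.intervalIntegrable _ _
    have hadd := intervalIntegral.integral_add_adjacent_intervals hii hii2
    have hrefl : ∫ x in (π/2:ℝ)..π, f x = ∫ x in (0:ℝ)..(π/2), f x := by
      have h := intervalIntegral.integral_comp_sub_left (a := (0:ℝ)) (b := π/2) f π
      rw [sub_zero] at h
      have he : π - π/2 = π/2 := by ring
      rw [he] at h
      rw [← h]
      apply intervalIntegral.integral_congr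
      intro t ht
      rw [uIcc_of_le (by positivity : (0:ℝ) ≤ π/2)] at ht
      exact hsym t ht.1
    rw [← MeasureTheory.integral_Ioc_eq_integral_Ioo,
      ← intervalIntegral.integral_of_le hπ.le, intervalIntegral.integral_div,
      ← hadd, hrefl]
    ring

end SinDivAux

/-- If `f` is continuous, `π`-periodic and symmetric about `π/2` on `[0, ∞)`, then the
improper integral `∫₀^∞ (sin x / x) f x dx` exists and equals `∫₀^{π/2} f x dx`. -/
theorem integral_sin_div_id_mul_eq (f : ℝ → ℝ) (hf : Continuous f)
    (hper : ∀ x : ℝ, 0 ≤ x → f (x + π) = f x)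
    (hsym : ∀ x : ℝ, 0 ≤ x → f (π - x) = f x) :
    Tendsto (fun T : ℝ => ∫ x in (0:ℝ)..T, (Real.sin x / x) * f x)
      atTop (nhds (∫ x in (0:ℝ)..(π / 2), f x)) := by
  have hπ : (0:ℝ) < π := Real.pi_pos
  obtain ⟨M, hM0, hM⟩ := global_bound f hf hper
  have hfloor : Tendsto (fun T : ℝ => ⌊T / π⌋₊) atTop atTop :=
    tendsto_nat_floor_atTop.comp (Tendsto.atTop_div_const hπ tendsto_id)
  have h1 : Tendsto (fun T : ℝ =>
      ∫ x in (0:ℝ)..((⌊T/π⌋₊ : ℝ) * π), Real.sin x / x * f x) atTop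
      (nhds (∫ x in (0:ℝ)..(π/2), f x)) :=
    (An_tendsto f hf hper hsym).comp hfloor
  have h2 : Tendsto (fun T : ℝ =>
      (∫ x in (0:ℝ)..T, Real.sin x / x * f x)
        - ∫ x in (0:ℝ)..((⌊T/π⌋₊ : ℝ) * π), Real.sin x / x * f x) atTop (nhds 0) := by
    apply squeeze_zero_norm' (a := fun T : ℝ => M / (⌊T/π⌋₊ : ℝ))
    · filter_upwards [eventually_ge_atTop π] with T hT
      set n := ⌊T / π⌋₊ with hn
      have hT0 : 0 ≤ T := le_trans hπ.le hT
      have hn1 : 1 ≤ n := Nat.le_floor (by rw [Nat.cast_one, le_div_iff₀ hπ]; linarith)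
      have hn0 : (0:ℝ) < (n:ℝ) := by exact_mod_cast hn1
      have hnT : (n:ℝ) * π ≤ T := by
        have := Nat.floor_le (div_nonneg hT0 hπ.le)
        rw [← hn] at this
        calc (n:ℝ) * π ≤ (T/π) * π := by nlinarith
          _ = T := by field_simp
      have hTn : T < ((n:ℝ) + 1) * π := by
        have := Nat.lt_floor_add_one (T / π)
        rw [← hn] at this
        calc T = (T/π) * π := by field_simp
          _ < ((n:ℝ) + 1) * π := by nlinarith
      rw [intervalIntegral.integral_interval_sub_left (intInt f hf 0 T)
        (intInt f hf 0 ((n:ℝ) * π))]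
      have hbound : ∀ x ∈ Set.uIoc ((n:ℝ) * π) T,
          ‖Real.sin x / x * f x‖ ≤ M / ((n:ℝ) * π) := by
        intro x hx
        rw [Set.uIoc_of_le hnT] at hx
        obtain ⟨hx1, hx2⟩ := hx
        have hx0 : (0:ℝ) < x := lt_of_le_of_lt (by positivity) hx1
        have hfx : |f x| ≤ M := hM x hx0.le
        have hsx : |Real.sin x / x| ≤ 1 / x := by
          rw [abs_div, abs_of_pos hx0, div_le_div_iff_of_pos_right hx0]
          exact Real.abs_sin_le_one x
        calc ‖Real.sin x / x * f x‖ = |Real.sin x / x| * |f x| := abs_mul _ _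
          _ ≤ (1 / x) * M := mul_le_mul hsx hfx (abs_nonneg _) (by positivity)
          _ ≤ (1 / ((n:ℝ) * π)) * M := by
              apply mul_le_mul_of_nonneg_right _ hM0
              apply div_le_div_of_nonneg_left zero_le_one (by positivity)
                (le_of_lt hx1) |>.trans_eq rfl
          _ = M / ((n:ℝ) * π) := by ring
      calc ‖∫ x in ((n:ℝ) * π)..T, Real.sin x / x * f x‖
          ≤ M / ((n:ℝ) * π) * |T - (n:ℝ) * π| :=
            intervalIntegral.norm_integral_le_of_norm_le_const hbound
        _ ≤ M / ((n:ℝ) * π) * π := by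
            apply mul_le_mul_of_nonneg_left _ (by positivity)
            rw [abs_of_nonneg (by linarith)]
            linarith
        _ = M / (n:ℝ) := by field_simp
    · exact Tendsto.div_atTop tendsto_const_nhds
        (tendsto_natCast_atTop_atTop.comp hfloor)
  have h3 := h2.add h1
  rw [zero_add] at h3
  apply h3.congr
  intro T
  ring
end

section
/- Let f : ℝ → ℝ be a continuous function satisfying f(x + π) = f(x) and f(π − x) = f(x) for all x ≥ 0, and suppose the integrals ∫₀^∞ (sin²x / x²) f(x) dx and ∫₀^∞ (sin x / x) f(x) dx (the latter as an improper integral) both exist. Then ∫₀^∞ (sin²x / x²) f(x) dx = ∫₀^∞ (sin x / x) f(x) dx. -/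
open Real Filter MeasureTheory intervalIntegral

namespace SinSqAux

open Finset

lemma summable_aux {c : ℝ} (hc : 0 < c) :
    Summable (fun n : ℕ => 1 / (c + (n : ℝ) * π) ^ 2) := by
  rw [← summable_nat_add_iff 1]
  have base : Summable (fun n : ℕ => 1 / ((n : ℝ) + 1) ^ 2) := by
    have : Summable (fun n : ℕ => 1 / (n : ℝ) ^ 2) :=
      Real.summable_one_div_nat_pow.mpr one_lt_two
    rw [← summable_nat_add_iff 1] at this
    convert this using 2 with n
    · rfl
    push_cast
    ring
  apply Summable.of_nonneg_of_le (fun n => by positivity) _ (base.mul_left (1 / π ^ 2))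
  intro n
  have h1 : ((n : ℝ) + 1) * π ≤ c + ((n : ℕ) + 1 : ℕ) * π := by
    push_cast
    nlinarith [pi_pos]
  have h2 : (0 : ℝ) < ((n : ℝ) + 1) * π := by positivity
  have := one_div_le_one_div_of_le (by positivity) (pow_le_pow_left₀ h2.le h1 2)
  calc 1 / (c + ((n : ℕ) + 1 : ℕ) * π) ^ 2 ≤ 1 / (((n : ℝ) + 1) * π) ^ 2 := this
    _ = 1 / π ^ 2 * (1 / ((n : ℝ) + 1) ^ 2) := by
        rw [mul_pow]
        rw [one_div, mul_inv, one_div, one_div, mul_comm]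

lemma denom_ne_zero {x : ℝ} (hx0 : 0 < x) (hxπ : x < π) (k : ℤ) :
    x + (k : ℝ) * π ≠ 0 := by
  rcases le_or_gt 0 k with hk | hk
  · have : (0 : ℝ) ≤ (k : ℝ) * π := mul_nonneg (by exact_mod_cast hk) pi_pos.le
    positivity
  · have hk0 : k ≤ -1 := by omega
    have hk' : (k : ℝ) ≤ -1 := by exact_mod_cast hk0
    have : (k : ℝ) * π ≤ -π := by nlinarith [pi_pos]
    intro h
    nlinarith

lemma neg_term_eq (x : ℝ) (n : ℕ) :
    1 / (x + ((-((n : ℤ) + 1) : ℤ) : ℝ) * π) ^ 2 = 1 / ((π - x) + (n : ℝ) * π) ^ 2 := by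
  have : (x + ((-((n : ℤ) + 1) : ℤ) : ℝ) * π) = -((π - x) + (n : ℝ) * π) := by
    push_cast; ring
  rw [this, neg_pow]
  simp

lemma summable_int {x : ℝ} (hx0 : 0 < x) (hxπ : x < π) :
    Summable (fun k : ℤ => 1 / (x + (k : ℝ) * π) ^ 2) := by
  apply Summable.of_nat_of_neg_add_one
  · exact summable_aux hx0
  · have := summable_aux (c := π - x) (by linarith)
    convert this using 2 with n
    exact_mod_cast neg_term_eq _ n

lemma hasSum_int_even_odd {g : ℤ → ℝ} {a b : ℝ}
    (ha : HasSum (fun k : ℤ => g (2 * k)) a)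
    (hb : HasSum (fun k : ℤ => g (2 * k + 1)) b) : HasSum g (a + b) := by
  have h1 : Function.Injective (fun k : ℤ => 2 * k) := fun p q h => by
    simpa using h
  have h2 : Function.Injective (fun k : ℤ => 2 * k + 1) := fun p q h => by
    simp only at h; omega
  have hc : IsCompl (Set.range fun k : ℤ => 2 * k) (Set.range fun k : ℤ => 2 * k + 1) := by
    constructor
    · rw [Set.disjoint_left]
      rintro m ⟨p, rfl⟩ ⟨q, hq⟩
      simp only at hq
      omega
    · rw [codisjoint_iff_le_sup]
      intro m _
      rcases Int.even_or_odd m with ⟨p, hp⟩ | ⟨p, hp⟩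
      · exact Set.mem_union_left _ ⟨p, by simp only; omega⟩
      · exact Set.mem_union_right _ ⟨p, by simp only; omega⟩
  exact (h1.hasSum_range_iff.mpr ha).add_isCompl hc (h2.hasSum_range_iff.mpr hb)

noncomputable def S (x : ℝ) : ℝ := ∑' k : ℤ, 1 / (x + (k : ℝ) * π) ^ 2

lemma S_func_eq {x : ℝ} (hx0 : 0 < x) (hxπ : x < π) :
    S x = (S (x / 2) + S ((x + π) / 2)) / 4 := by
  have pi0 := pi_pos
  have heven : HasSum (fun k : ℤ => 1 / (x + ((2 * k : ℤ) : ℝ) * π) ^ 2) (S (x / 2) * (1 / 4)) := by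
    have h := ((summable_int (x := x / 2) (by linarith) (by linarith)).hasSum).mul_right (1 / 4)
    have hfun : (fun k : ℤ => 1 / (x / 2 + (k : ℝ) * π) ^ 2 * (1 / 4))
        = fun k : ℤ => 1 / (x + ((2 * k : ℤ) : ℝ) * π) ^ 2 := by
      funext k
      have he : x + ((2 * k : ℤ) : ℝ) * π = 2 * (x / 2 + (k : ℝ) * π) := by push_cast; ring
      rw [he, mul_pow, one_div, one_div, ← mul_inv]
      ring_nf
    rwa [hfun] at h
  have hodd : HasSum (fun k : ℤ => 1 / (x + ((2 * k + 1 : ℤ) : ℝ) * π) ^ 2)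
      (S ((x + π) / 2) * (1 / 4)) := by
    have h := ((summable_int (x := (x + π) / 2) (by linarith) (by linarith)).hasSum).mul_right (1 / 4)
    have hfun : (fun k : ℤ => 1 / ((x + π) / 2 + (k : ℝ) * π) ^ 2 * (1 / 4))
        = fun k : ℤ => 1 / (x + ((2 * k + 1 : ℤ) : ℝ) * π) ^ 2 := by
      funext k
      have he : x + ((2 * k + 1 : ℤ) : ℝ) * π = 2 * ((x + π) / 2 + (k : ℝ) * π) := by push_cast; ring
      rw [he, mul_pow, one_div, one_div, ← mul_inv]
      ring_nf
    rwa [hfun] at h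
  have := hasSum_int_even_odd (g := fun k : ℤ => 1 / (x + (k : ℝ) * π) ^ 2) heven hodd
  rw [S, this.tsum_eq]
  ring

lemma csc_func_eq {x : ℝ} (hx0 : 0 < x) (hxπ : x < π) :
    1 / Real.sin x ^ 2 = (1 / Real.sin (x / 2) ^ 2 + 1 / Real.sin ((x + π) / 2) ^ 2) / 4 := by
  have pi0 := pi_pos
  have hs : 0 < Real.sin (x / 2) :=
    sin_pos_of_pos_of_lt_pi (by linarith) (by linarith)
  have hc : 0 < Real.cos (x / 2) :=
    cos_pos_of_mem_Ioo ⟨by linarith, by linarith⟩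
  have hcos : Real.sin ((x + π) / 2) = Real.cos (x / 2) := by
    rw [show (x + π) / 2 = x / 2 + π / 2 by ring, sin_add_pi_div_two]
  have hsin : Real.sin x = 2 * Real.sin (x / 2) * Real.cos (x / 2) := by
    conv_lhs => rw [show x = 2 * (x / 2) by ring, sin_two_mul]
  rw [hcos, hsin]
  have h1 : Real.sin (x / 2) ≠ 0 := ne_of_gt hs
  have h2 : Real.cos (x / 2) ≠ 0 := ne_of_gt hc
  have key : 1 / Real.sin (x / 2) ^ 2 + 1 / Real.cos (x / 2) ^ 2
      = 1 / (Real.sin (x / 2) ^ 2 * Real.cos (x / 2) ^ 2) := by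
    rw [div_add_div _ _ (by positivity) (by positivity)]
    rw [one_mul, mul_one, ← cos_sq_add_sin_sq (x / 2)]
  rw [key, mul_pow, mul_pow]
  rw [one_div, one_div, mul_inv, mul_inv, mul_inv]
  norm_num
  ring

noncomputable def T (y : ℝ) : ℝ := ∑' n : ℕ, 1 / (y + (n : ℝ) * π) ^ 2

noncomputable def B1 : ℝ := ∑' n : ℕ, 1 / (π + (n : ℝ) * π) ^ 2

lemma T_bounds {y : ℝ} (hy : 0 < y) : 0 ≤ T y - 1 / y ^ 2 ∧ T y - 1 / y ^ 2 ≤ B1 := by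
  have hsum := summable_aux hy
  have hsum1 : Summable (fun n : ℕ => 1 / (y + ((n : ℝ) + 1) * π) ^ 2) := by
    have h := (summable_nat_add_iff 1).mpr (summable_aux hy)
    refine h.congr fun n => ?_
    push_cast
    ring_nf
  have hT : T y = 1 / y ^ 2 + ∑' n : ℕ, 1 / (y + ((n : ℝ) + 1) * π) ^ 2 := by
    rw [T, hsum.tsum_eq_zero_add]
    congr 1
    · norm_num
    · exact tsum_congr fun n => by push_cast; ring_nf
  constructor
  · rw [hT]
    have : 0 ≤ ∑' n : ℕ, 1 / (y + ((n : ℝ) + 1) * π) ^ 2 :=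
      tsum_nonneg fun n => by positivity
    linarith
  · rw [hT]
    have hle : ∑' n : ℕ, 1 / (y + ((n : ℝ) + 1) * π) ^ 2 ≤ B1 := by
      apply Summable.tsum_le_tsum _ hsum1 (summable_aux pi_pos)
      intro n
      have h1 : π + (n : ℝ) * π ≤ y + ((n : ℝ) + 1) * π := by nlinarith [pi_pos]
      have h2 : (0 : ℝ) < π + (n : ℝ) * π := by positivity
      exact one_div_le_one_div_of_le (by positivity) (pow_le_pow_left₀ h2.le h1 2)
    linarith

lemma B1_nonneg : 0 ≤ B1 := tsum_nonneg fun n => by positivity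

lemma x_sub_sin_le {x : ℝ} (hx0 : 0 < x) (hx2 : x ≤ π / 2) : x - Real.sin x ≤ x ^ 3 := by
  rcases le_or_gt x 1 with h1 | h1
  · have := Real.sin_gt_sub_cube hx0
    nlinarith [pow_pos hx0 3]
  · have hs : 0 ≤ Real.sin x := Real.sin_nonneg_of_nonneg_of_le_pi hx0.le
      (by linarith [pi_pos])
    nlinarith [mul_nonneg (mul_nonneg hx0.le (sub_nonneg.mpr h1.le)) (by linarith : (0:ℝ) ≤ x + 1)]

lemma csc_half_bound {x : ℝ} (hx0 : 0 < x) (hx2 : x ≤ π / 2) :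
    |1 / Real.sin x ^ 2 - 1 / x ^ 2 - 1 / (π - x) ^ 2| ≤ 6 := by
  have pi0 := pi_pos
  have hs : 0 < Real.sin x := sin_pos_of_pos_of_lt_pi hx0 (by linarith)
  have hsx : Real.sin x ≤ x := Real.sin_le hx0.le
  have jordan' : 2 * x ≤ π * Real.sin x := by
    have hj := Real.mul_le_sin hx0.le hx2
    rw [div_mul_eq_mul_div, div_le_iff₀ pi0] at hj
    linarith
  have hcube := x_sub_sin_le hx0 hx2
  set s := Real.sin x with hsdef
  have e1 : 1 / s ^ 2 - 1 / x ^ 2 = (x - s) * (x + s) / (s ^ 2 * x ^ 2) := by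
    field_simp
    ring
  have e2 : (x - s) * (x + s) ≤ 2 * x ^ 4 := by nlinarith
  have e3 : 4 * x ^ 2 ≤ π ^ 2 * s ^ 2 := by nlinarith
  have upper : 1 / s ^ 2 - 1 / x ^ 2 ≤ π ^ 2 / 2 := by
    rw [e1, div_le_iff₀ (by positivity)]
    nlinarith [e2, mul_le_mul_of_nonneg_right e3 (sq_nonneg x)]
  have lower : 0 ≤ 1 / s ^ 2 - 1 / x ^ 2 := by
    have : s ^ 2 ≤ x ^ 2 := by nlinarith
    have := one_div_le_one_div_of_le (by positivity) this
    linarith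
  have third1 : 0 < 1 / (π - x) ^ 2 := by
    have : 0 < π - x := by linarith
    positivity
  have third2 : 1 / (π - x) ^ 2 ≤ 4 / π ^ 2 := by
    have h1 : π / 2 ≤ π - x := by linarith
    have h2 : (π / 2) ^ 2 ≤ (π - x) ^ 2 := by nlinarith
    have := one_div_le_one_div_of_le (by positivity) h2
    calc 1 / (π - x) ^ 2 ≤ 1 / (π / 2) ^ 2 := this
      _ = 4 / π ^ 2 := by field_simp; ring
  have third3 : (4 : ℝ) / π ^ 2 ≤ 1 := by
    have : (2 : ℝ) ≤ π := by linarith [pi_gt_three]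
    rw [div_le_one (by positivity)]
    nlinarith
  have hpi : π ^ 2 / 2 ≤ 5 := by nlinarith [pi_lt_d2, pi_pos]
  rw [abs_le]
  constructor <;> linarith

lemma csc_bound {x : ℝ} (hx0 : 0 < x) (hxπ : x < π) :
    |1 / Real.sin x ^ 2 - 1 / x ^ 2 - 1 / (π - x) ^ 2| ≤ 6 := by
  rcases le_or_gt x (π / 2) with h | h
  · exact csc_half_bound hx0 h
  · have pi0 := pi_pos
    have h1 := csc_half_bound (x := π - x) (by linarith) (by linarith)
    rw [sin_pi_sub] at h1
    have : π - (π - x) = x := by ring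
    rw [this] at h1
    calc |1 / Real.sin x ^ 2 - 1 / x ^ 2 - 1 / (π - x) ^ 2|
        = |1 / Real.sin x ^ 2 - 1 / (π - x) ^ 2 - 1 / x ^ 2| := by
          congr 1; ring
      _ ≤ 6 := h1

lemma S_sub_csc_bound : ∃ C : ℝ, 0 ≤ C ∧ ∀ x : ℝ, 0 < x → x < π →
    |S x - 1 / Real.sin x ^ 2| ≤ C := by
  refine ⟨2 * B1 + 6, by linarith [B1_nonneg], fun x hx0 hxπ => ?_⟩
  have pi0 := pi_pos
  have h1 : Summable (fun n : ℕ => 1 / (x + ((n : ℤ) : ℝ) * π) ^ 2) :=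
    (summable_aux hx0).congr fun n => by norm_num
  have h2 : Summable (fun n : ℕ => 1 / (x + ((-((n : ℤ) + 1) : ℤ) : ℝ) * π) ^ 2) :=
    (summable_aux (c := π - x) (by linarith)).congr fun n => (neg_term_eq x n).symm
  have hS : S x = T x + T (π - x) := by
    have eA : (∑' n : ℕ, 1 / (x + ((n : ℤ) : ℝ) * π) ^ 2) = T x :=
      tsum_congr fun n => by norm_num
    have eB : (∑' n : ℕ, 1 / (x + ((-((n : ℤ) + 1) : ℤ) : ℝ) * π) ^ 2) = T (π - x) :=
      tsum_congr fun n => neg_term_eq x n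
    rw [S, tsum_of_nat_of_neg_add_one (f := fun k : ℤ => 1 / (x + (k : ℝ) * π) ^ 2) h1 h2, eA, eB]
  obtain ⟨a1, a2⟩ := T_bounds hx0
  obtain ⟨b1, b2⟩ := T_bounds (y := π - x) (by linarith)
  have hc := csc_bound hx0 hxπ
  rw [abs_le] at hc ⊢
  constructor <;> nlinarith

lemma hasSum_csc_sq {x : ℝ} (hx0 : 0 < x) (hxπ : x < π) :
    HasSum (fun k : ℤ => 1 / (x + (k : ℝ) * π) ^ 2) (1 / Real.sin x ^ 2) := by
  obtain ⟨C, hC0, hC⟩ := S_sub_csc_bound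
  have iter : ∀ k : ℕ, ∀ y : ℝ, 0 < y → y < π → |S y - 1 / Real.sin y ^ 2| ≤ C / 2 ^ k := by
    intro k
    induction k with
    | zero => simpa using hC
    | succ k ih =>
      intro y hy0 hyπ
      have pi0 := pi_pos
      have e : S y - 1 / Real.sin y ^ 2 =
          ((S (y / 2) - 1 / Real.sin (y / 2) ^ 2) +
           (S ((y + π) / 2) - 1 / Real.sin ((y + π) / 2) ^ 2)) / 4 := by
        rw [S_func_eq hy0 hyπ, csc_func_eq hy0 hyπ]
        ring
      have i1 := ih (y / 2) (by linarith) (by linarith)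
      have i2 := ih ((y + π) / 2) (by linarith) (by linarith)
      have h2k : (0 : ℝ) < 2 ^ k := by positivity
      calc |S y - 1 / Real.sin y ^ 2|
          = |(S (y / 2) - 1 / Real.sin (y / 2) ^ 2) +
             (S ((y + π) / 2) - 1 / Real.sin ((y + π) / 2) ^ 2)| / 4 := by
            rw [e, abs_div]; norm_num
        _ ≤ (C / 2 ^ k + C / 2 ^ k) / 4 := by
            have habs := abs_add_le (S (y / 2) - 1 / Real.sin (y / 2) ^ 2)
              (S ((y + π) / 2) - 1 / Real.sin ((y + π) / 2) ^ 2)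
            gcongr
            linarith
        _ = C / 2 ^ (k + 1) := by
            rw [pow_succ]
            field_simp
            ring
  have key : S x = 1 / Real.sin x ^ 2 := by
    have lim : Tendsto (fun k : ℕ => C / 2 ^ k) atTop (nhds 0) := by
      have h1 := tendsto_pow_atTop_nhds_zero_of_lt_one (r := (1/2 : ℝ)) (by norm_num) (by norm_num)
      have h2 := h1.const_mul C
      rw [mul_zero] at h2
      refine h2.congr fun k => ?_
      rw [div_pow, one_pow, mul_one_div]
    have hle : |S x - 1 / Real.sin x ^ 2| ≤ 0 :=
      ge_of_tendsto' lim (fun k => iter k x hx0 hxπ)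
    have h0 := abs_nonneg (S x - 1 / Real.sin x ^ 2)
    have := abs_eq_zero.mp (le_antisymm hle h0)
    linarith [sub_eq_zero.mp this]
  have h := (summable_int hx0 hxπ).hasSum
  rw [show (∑' k : ℤ, 1 / (x + (k : ℝ) * π) ^ 2) = S x from rfl, key] at h
  exact h

lemma summable_cot_terms {a b : ℝ} (ha : 0 < a) (hab : a ≤ b) (hb : b < π) :
    Summable (fun k : ℤ => 1 / (a + (k : ℝ) * π) - 1 / (b + (k : ℝ) * π)) := by
  have pi0 := pi_pos
  have hb0 : 0 < b := lt_of_lt_of_le ha hab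
  apply Summable.of_nat_of_neg_add_one
  · apply Summable.of_nonneg_of_le _ _ ((summable_aux ha).mul_left (b - a))
    · intro n
      have hA : 0 < a + (n : ℝ) * π := by positivity
      have hAB : a + (n : ℝ) * π ≤ b + (n : ℝ) * π := by push_cast; linarith
      have := one_div_le_one_div_of_le hA hAB
      push_cast
      push_cast at this
      linarith
    · intro n
      have hA : 0 < a + (n : ℝ) * π := by positivity
      have hB : 0 < b + (n : ℝ) * π := by positivity
      have hid : 1 / (a + (n : ℝ) * π) - 1 / (b + (n : ℝ) * π)
          = (b - a) / ((a + (n : ℝ) * π) * (b + (n : ℝ) * π)) := by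
        field_simp
        try ring
      have hle : (b - a) / ((a + (n : ℝ) * π) * (b + (n : ℝ) * π))
          ≤ (b - a) / ((a + (n : ℝ) * π) * (a + (n : ℝ) * π)) := by
        apply div_le_div_of_nonneg_left (by linarith) (by positivity)
        have : a + (n : ℝ) * π ≤ b + (n : ℝ) * π := by linarith
        nlinarith
      have : (b - a) * (1 / (a + (n : ℝ) * π) ^ 2)
          = (b - a) / ((a + (n : ℝ) * π) * (a + (n : ℝ) * π)) := by
        rw [mul_one_div, sq]
      push_cast
      push_cast at hid hle this
      rw [hid, this]
      exact hle
  · apply Summable.of_nonneg_of_le _ _ ((summable_aux (c := π - b) (by linarith)).mul_left (b - a))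
    · intro n
      have hA : (0:ℝ) < ((n : ℝ) + 1) * π - a := by nlinarith
      have hB : (0:ℝ) < ((n : ℝ) + 1) * π - b := by nlinarith
      have h1 : 1 / (a + ((-((n:ℤ) + 1) : ℤ) : ℝ) * π) = -(1 / (((n:ℝ) + 1) * π - a)) := by
        rw [show a + ((-((n:ℤ) + 1) : ℤ) : ℝ) * π = -((((n:ℝ) + 1) * π - a)) by push_cast; ring]
        rw [one_div, one_div, inv_neg]
      have h2 : 1 / (b + ((-((n:ℤ) + 1) : ℤ) : ℝ) * π) = -(1 / (((n:ℝ) + 1) * π - b)) := by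
        rw [show b + ((-((n:ℤ) + 1) : ℤ) : ℝ) * π = -((((n:ℝ) + 1) * π - b)) by push_cast; ring]
        rw [one_div, one_div, inv_neg]
      rw [h1, h2]
      have hBA : ((n:ℝ) + 1) * π - b ≤ ((n:ℝ) + 1) * π - a := by linarith
      have := one_div_le_one_div_of_le hB hBA
      linarith
    · intro n
      have hA : (0:ℝ) < ((n : ℝ) + 1) * π - a := by nlinarith
      have hB : (0:ℝ) < ((n : ℝ) + 1) * π - b := by nlinarith
      have h1 : 1 / (a + ((-((n:ℤ) + 1) : ℤ) : ℝ) * π) = -(1 / (((n:ℝ) + 1) * π - a)) := by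
        rw [show a + ((-((n:ℤ) + 1) : ℤ) : ℝ) * π = -((((n:ℝ) + 1) * π - a)) by push_cast; ring]
        rw [one_div, one_div, inv_neg]
      have h2 : 1 / (b + ((-((n:ℤ) + 1) : ℤ) : ℝ) * π) = -(1 / (((n:ℝ) + 1) * π - b)) := by
        rw [show b + ((-((n:ℤ) + 1) : ℤ) : ℝ) * π = -((((n:ℝ) + 1) * π - b)) by push_cast; ring]
        rw [one_div, one_div, inv_neg]
      rw [h1, h2]
      have hid : -(1 / (((n:ℝ) + 1) * π - a)) - -(1 / (((n:ℝ) + 1) * π - b))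
          = (b - a) / ((((n:ℝ) + 1) * π - a) * (((n:ℝ) + 1) * π - b)) := by
        field_simp
        try ring
      rw [hid]
      have hle : (b - a) / ((((n:ℝ) + 1) * π - a) * (((n:ℝ) + 1) * π - b))
          ≤ (b - a) / ((((n:ℝ) + 1) * π - b) * (((n:ℝ) + 1) * π - b)) := by
        apply div_le_div_of_nonneg_left (by linarith) (by positivity)
        nlinarith
      have heq : (b - a) * (1 / (π - b + (n : ℝ) * π) ^ 2)
          = (b - a) / ((((n:ℝ) + 1) * π - b) * (((n:ℝ) + 1) * π - b)) := by
        rw [mul_one_div, sq, show π - b + (n : ℝ) * π = ((n:ℝ) + 1) * π - b by ring]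
      rw [heq]
      exact hle

lemma hasSum_cot_diff {a b : ℝ} (ha : 0 < a) (hab : a ≤ b) (hb : b < π) :
    HasSum (fun k : ℤ => 1 / (a + (k : ℝ) * π) - 1 / (b + (k : ℝ) * π))
      (Real.cos a / Real.sin a - Real.cos b / Real.sin b) := by
  have pi0 := pi_pos
  set F : ℤ → ℝ → ℝ := fun k x => 1 / (x + (k : ℝ) * π) ^ 2 with hF
  have hne : ∀ k : ℤ, ∀ x ∈ Set.Icc a b, x + (k : ℝ) * π ≠ 0 := fun k x hx =>
    denom_ne_zero (lt_of_lt_of_le ha hx.1) (lt_of_le_of_lt hx.2 hb) k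
  have hcontOn : ∀ k : ℤ, ContinuousOn (F k) (Set.Icc a b) := by
    intro k
    apply ContinuousOn.div continuousOn_const
      ((continuous_id.add continuous_const).pow 2).continuousOn
    intro x hx
    exact pow_ne_zero 2 (hne k x hx)
  have hint : ∀ k : ℤ, IntervalIntegrable (F k) volume a b := by
    intro k
    apply ContinuousOn.intervalIntegrable
    rw [Set.uIcc_of_le hab]
    exact hcontOn k
  have hderiv : ∀ k : ℤ, ∀ x ∈ Set.uIcc a b,
      HasDerivAt (fun y => -(1 / (y + (k : ℝ) * π))) (F k x) x := by
    intro k x hx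
    rw [Set.uIcc_of_le hab] at hx
    have hx0 : x + (k : ℝ) * π ≠ 0 := hne k x hx
    have h1 : HasDerivAt (fun y : ℝ => y + (k : ℝ) * π) 1 x := (hasDerivAt_id x).add_const _
    have h3 := (h1.inv hx0).neg
    have : -(-1 / (x + (k : ℝ) * π) ^ 2) = F k x := by
      rw [hF]
      field_simp
    rw [← this]
    convert h3 using 2 with y
    · rfl
    · rfl
    rw [one_div]
    rfl
  have hval : ∀ k : ℤ, ∫ x in a..b, F k x
      = 1 / (a + (k : ℝ) * π) - 1 / (b + (k : ℝ) * π) := by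
    intro k
    rw [intervalIntegral.integral_eq_sub_of_hasDerivAt (hderiv k) (hint k)]
    ring
  set μ := volume.restrict (Set.Ioc a b) with hμ
  have hInt : ∀ k : ℤ, Integrable (F k) μ := fun k =>
    ((hcontOn k).integrableOn_Icc).mono_set Set.Ioc_subset_Icc_self
  have hIoc : ∀ k : ℤ, (∫ x, F k x ∂μ) = 1 / (a + (k : ℝ) * π) - 1 / (b + (k : ℝ) * π) := by
    intro k
    rw [← hval k, intervalIntegral.integral_of_le hab]
    try rfl
  have hnorm : ∀ k : ℤ, (∫ x, ‖F k x‖ ∂μ) = 1 / (a + (k : ℝ) * π) - 1 / (b + (k : ℝ) * π) := by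
    intro k
    have : ∀ x : ℝ, ‖F k x‖ = F k x := fun x => by
      rw [Real.norm_eq_abs, abs_of_nonneg (by rw [hF]; positivity)]
    simp_rw [this]
    exact hIoc k
  have hsnorm : Summable (fun k : ℤ => ∫ x, ‖F k x‖ ∂μ) := by
    rw [show (fun k : ℤ => ∫ x, ‖F k x‖ ∂μ)
        = fun k : ℤ => 1 / (a + (k : ℝ) * π) - 1 / (b + (k : ℝ) * π) from funext hnorm]
    exact summable_cot_terms ha hab hb
  have hkey := MeasureTheory.hasSum_integral_of_summable_integral_norm hInt hsnorm
  have h2 : (∫ x, (∑' k, F k x) ∂μ) = Real.cos a / Real.sin a - Real.cos b / Real.sin b := by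
    have htsum : ∀ x ∈ Set.Ioc a b, (∑' k, F k x) = 1 / Real.sin x ^ 2 := fun x hx =>
      (hasSum_csc_sq (lt_trans ha hx.1) (lt_of_le_of_lt hx.2 hb)).tsum_eq
    have e1 : (∫ x, (∑' k, F k x) ∂μ) = ∫ x in Set.Ioc a b, 1 / Real.sin x ^ 2 :=
      setIntegral_congr_fun measurableSet_Ioc htsum
    rw [e1, ← intervalIntegral.integral_of_le hab]
    have hds : ∀ x ∈ Set.uIcc a b,
        HasDerivAt (fun y => -(Real.cos y / Real.sin y)) (1 / Real.sin x ^ 2) x := by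
      intro x hx
      rw [Set.uIcc_of_le hab] at hx
      have hsx : 0 < Real.sin x :=
        sin_pos_of_pos_of_lt_pi (lt_of_lt_of_le ha hx.1) (lt_of_le_of_lt hx.2 hb)
      have h1 := ((Real.hasDerivAt_cos x).div (Real.hasDerivAt_sin x) hsx.ne').neg
      refine h1.congr_deriv ?_
      have h2 := sin_sq_add_cos_sq x
      field_simp
      linarith
    have hci : IntervalIntegrable (fun x => 1 / Real.sin x ^ 2) volume a b := by
      apply ContinuousOn.intervalIntegrable
      rw [Set.uIcc_of_le hab]
      apply ContinuousOn.div continuousOn_const (continuous_sin.continuousOn.pow 2)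
      intro x hx
      exact pow_ne_zero 2 (sin_pos_of_pos_of_lt_pi (lt_of_lt_of_le ha hx.1)
        (lt_of_le_of_lt hx.2 hb)).ne'
    rw [intervalIntegral.integral_eq_sub_of_hasDerivAt hds hci]
    ring
  rw [show (fun k : ℤ => ∫ x, F k x ∂μ)
      = fun k : ℤ => 1 / (a + (k : ℝ) * π) - 1 / (b + (k : ℝ) * π) from funext hIoc, h2] at hkey
  exact hkey

lemma hasSum_csc {x : ℝ} (hx0 : 0 < x) (hxπ : x < π) :
    HasSum (fun k : ℤ => 1 / (x + 2 * (k : ℝ) * π) - 1 / (x + (2 * (k : ℝ) + 1) * π))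
      (1 / Real.sin x) := by
  have pi0 := pi_pos
  have h := (hasSum_cot_diff (a := x / 2) (b := (x + π) / 2)
    (by linarith) (by linarith) (by linarith)).mul_left (1 / 2)
  have hs : 0 < Real.sin (x / 2) := sin_pos_of_pos_of_lt_pi (by linarith) (by linarith)
  have hc : 0 < Real.cos (x / 2) := cos_pos_of_mem_Ioo ⟨by linarith, by linarith⟩
  have hfun : (fun k : ℤ => (1 / 2) * (1 / (x / 2 + (k : ℝ) * π) - 1 / ((x + π) / 2 + (k : ℝ) * π)))
      = fun k : ℤ => 1 / (x + 2 * (k : ℝ) * π) - 1 / (x + (2 * (k : ℝ) + 1) * π) := by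
    funext k
    rw [show x + 2 * (k : ℝ) * π = 2 * (x / 2 + (k : ℝ) * π) by ring,
      show x + (2 * (k : ℝ) + 1) * π = 2 * ((x + π) / 2 + (k : ℝ) * π) by ring]
    rw [mul_sub]
    congr 1 <;> rw [one_div_mul_one_div]
  have hval : (1 / 2) * (Real.cos (x / 2) / Real.sin (x / 2)
      - Real.cos ((x + π) / 2) / Real.sin ((x + π) / 2)) = 1 / Real.sin x := by
    have e3 : Real.sin ((x + π) / 2) = Real.cos (x / 2) := by
      rw [show (x + π) / 2 = x / 2 + π / 2 by ring, sin_add_pi_div_two]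
    have e4 : Real.cos ((x + π) / 2) = -Real.sin (x / 2) := by
      rw [show (x + π) / 2 = x / 2 + π / 2 by ring, cos_add_pi_div_two]
    have e5 : Real.sin x = 2 * Real.sin (x / 2) * Real.cos (x / 2) := by
      conv_lhs => rw [show x = 2 * (x / 2) by ring, sin_two_mul]
    rw [e3, e4, e5]
    have hsq := sin_sq_add_cos_sq (x / 2)
    field_simp
    linear_combination hsq
  rw [hfun, hval] at h
  exact h

lemma alt_sum_bounds : ∀ (N : ℕ) (d : ℕ → ℝ), (∀ n, 0 ≤ d n) →
    (∀ m n, m ≤ n → d n ≤ d m) →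
    0 ≤ ∑ n ∈ range N, (-1 : ℝ) ^ n * d n ∧ ∑ n ∈ range N, (-1 : ℝ) ^ n * d n ≤ d 0 := by
  intro N
  induction N with
  | zero => intro d h0 _; simp [h0 0]
  | succ N ih =>
    intro d h0 hant
    obtain ⟨ih1, ih2⟩ := ih (fun n => d (n + 1)) (fun n => h0 _)
      (fun m n h => hant _ _ (by omega))
    have hz : (∑ i ∈ range N, ((-1:ℝ) ^ (i+1) * d (i+1) + (-1:ℝ) ^ i * d (i+1))) = 0 :=
      Finset.sum_eq_zero (fun i _ => by rw [pow_succ]; ring)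
    rw [Finset.sum_add_distrib] at hz
    have key : ∑ n ∈ range (N + 1), (-1 : ℝ) ^ n * d n
        = d 0 - ∑ n ∈ range N, (-1 : ℝ) ^ n * d (n + 1) := by
      rw [Finset.sum_range_succ' (fun n => (-1 : ℝ) ^ n * d n) N]
      simp only [pow_zero, one_mul]
      linarith
    rw [key]
    have := hant 0 1 (by omega)
    constructor <;> linarith

lemma pair_neg_flip {x : ℝ} (c : ℝ) (n : ℕ) : 1 / (x + ((-((n:ℤ) + 1) : ℤ) : ℝ) * c)
    = -(1 / (((n:ℝ) + 1) * c - x)) := by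
  rw [show x + ((-((n:ℤ) + 1) : ℤ) : ℝ) * c = -((((n:ℝ) + 1) * c - x)) by push_cast; ring]
  rw [one_div, one_div, inv_neg]

lemma hasSum_pairA {x : ℝ} (hx0 : 0 < x) (hxπ : x < π) :
    HasSum (fun n : ℕ =>
      1 / (x + (n : ℝ) * π) ^ 2 + 1 / (((n : ℝ) + 1) * π - x) ^ 2) (1 / Real.sin x ^ 2) := by
  have h := (hasSum_csc_sq hx0 hxπ).nat_add_neg_add_one
  refine h.congr_fun fun n => ?_
  have e2 : x + ((-((n:ℤ) + 1) : ℤ) : ℝ) * π = -((((n:ℝ) + 1) * π - x)) := by push_cast; ring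
  rw [e2, neg_sq]
  norm_num

lemma tendsto_SA {x : ℝ} (hx0 : 0 < x) (hxπ : x < π) :
    Tendsto (fun N : ℕ => Real.sin x ^ 2 * ∑ n ∈ range N,
        (1 / (x + (n : ℝ) * π) ^ 2 + 1 / (((n : ℝ) + 1) * π - x) ^ 2))
      atTop (nhds 1) := by
  have hsin : Real.sin x ≠ 0 := (sin_pos_of_pos_of_lt_pi hx0 hxπ).ne'
  have hpair := hasSum_pairA hx0 hxπ
  have h1 := hpair.tendsto_sum_nat.const_mul (Real.sin x ^ 2)
  rw [mul_one_div, div_self (pow_ne_zero 2 hsin)] at h1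
  exact h1

lemma SA_le_one {x : ℝ} (hx0 : 0 < x) (hxπ : x < π) (N : ℕ) :
    Real.sin x ^ 2 * ∑ n ∈ range N,
      (1 / (x + (n : ℝ) * π) ^ 2 + 1 / (((n : ℝ) + 1) * π - x) ^ 2) ≤ 1 := by
  have hsin : Real.sin x ≠ 0 := (sin_pos_of_pos_of_lt_pi hx0 hxπ).ne'
  have hpair := hasSum_pairA hx0 hxπ
  have hle := sum_le_hasSum (range N) (fun n _ => by positivity) hpair
  calc Real.sin x ^ 2 * ∑ n ∈ range N,
        (1 / (x + (n : ℝ) * π) ^ 2 + 1 / (((n : ℝ) + 1) * π - x) ^ 2)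
      ≤ Real.sin x ^ 2 * (1 / Real.sin x ^ 2) :=
        mul_le_mul_of_nonneg_left hle (by positivity)
    _ = 1 := by rw [mul_one_div, div_self (pow_ne_zero 2 hsin)]

lemma SA_nonneg {x : ℝ} (hx0 : 0 < x) (hxπ : x < π) (N : ℕ) :
    0 ≤ Real.sin x ^ 2 * ∑ n ∈ Finset.range N,
      (1 / (x + (n : ℝ) * π) ^ 2 + 1 / (((n : ℝ) + 1) * π - x) ^ 2) := by
  apply mul_nonneg (sq_nonneg _)
  apply Finset.sum_nonneg
  intro n _
  positivity

section SB
variable {x : ℝ}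

lemma d_antitone (hx0 : 0 < x) (hxπ : x < π) :
    ∀ m n : ℕ, m ≤ n → 1 / (x + (n : ℝ) * π) + 1 / (((n : ℝ) + 1) * π - x)
      ≤ 1 / (x + (m : ℝ) * π) + 1 / (((m : ℝ) + 1) * π - x) := by
  intro m n h
  have pi0 := pi_pos
  have hmn : (m : ℝ) ≤ (n : ℝ) := by exact_mod_cast h
  have h1 : (0:ℝ) < x + (m : ℝ) * π := by positivity
  have h2 : x + (m : ℝ) * π ≤ x + (n : ℝ) * π := by nlinarith
  have h3 : (0:ℝ) < ((m : ℝ) + 1) * π - x := by nlinarith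
  have h4 : ((m : ℝ) + 1) * π - x ≤ ((n : ℝ) + 1) * π - x := by nlinarith
  have := one_div_le_one_div_of_le h1 h2
  have := one_div_le_one_div_of_le h3 h4
  linarith

lemma d_nonneg (hx0 : 0 < x) (hxπ : x < π) (n : ℕ) :
    0 ≤ 1 / (x + (n : ℝ) * π) + 1 / (((n : ℝ) + 1) * π - x) := by
  have pi0 := pi_pos
  have h1 : (0:ℝ) < x + (n : ℝ) * π := by positivity
  have h3 : (0:ℝ) < ((n : ℝ) + 1) * π - x := by nlinarith
  positivity

lemma d_tendsto (hx0 : 0 < x) (hxπ : x < π) :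
    Tendsto (fun n : ℕ => 1 / (x + (n : ℝ) * π) + 1 / (((n : ℝ) + 1) * π - x))
      atTop (nhds 0) := by
  have pi0 := pi_pos
  have t1 : Tendsto (fun n : ℕ => x + (n : ℝ) * π) atTop atTop := by
    apply tendsto_atTop_add_const_left
    exact Tendsto.atTop_mul_const pi0 tendsto_natCast_atTop_atTop
  have t2 : Tendsto (fun n : ℕ => ((n : ℝ) + 1) * π - x) atTop atTop := by
    apply tendsto_atTop_add_const_right
    apply Tendsto.atTop_mul_const pi0
    exact tendsto_atTop_add_const_right _ _ tendsto_natCast_atTop_atTop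
  have h1 := t1.inv_tendsto_atTop
  have h2 := t2.inv_tendsto_atTop
  have := h1.add h2
  rw [add_zero] at this
  refine this.congr fun n => ?_
  simp [one_div]

/-- the key pairing identity for partial sums with an even number of terms -/
lemma sum_pair_eq (d : ℕ → ℝ) (N : ℕ) :
    ∑ n ∈ range (2 * N), (-1 : ℝ) ^ n * d n
      = ∑ j ∈ range N, (d (2 * j) - d (2 * j + 1)) := by
  induction N with
  | zero => simp
  | succ N ih =>
    rw [show 2 * (N + 1) = (2 * N + 1) + 1 by ring, Finset.sum_range_succ,
      Finset.sum_range_succ, Finset.sum_range_succ, ih]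
    have h1 : (-1 : ℝ) ^ (2 * N) = 1 := by rw [pow_mul]; norm_num
    have h2 : (-1 : ℝ) ^ (2 * N + 1) = -1 := by rw [pow_succ, h1]; norm_num
    rw [h1, h2]
    ring

lemma tendsto_SB (hx0 : 0 < x) (hxπ : x < π) :
    Tendsto (fun N : ℕ => Real.sin x * ∑ n ∈ range N,
        (-1 : ℝ) ^ n * (1 / (x + (n : ℝ) * π) + 1 / (((n : ℝ) + 1) * π - x)))
      atTop (nhds 1) := by
  have pi0 := pi_pos
  have hsin : Real.sin x ≠ 0 := (sin_pos_of_pos_of_lt_pi hx0 hxπ).ne'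
  set d : ℕ → ℝ := fun n => 1 / (x + (n : ℝ) * π) + 1 / (((n : ℝ) + 1) * π - x) with hd
  have hant : Antitone d := antitone_nat_of_succ_le fun n =>
    d_antitone hx0 hxπ n (n + 1) (by omega)
  obtain ⟨l, hl⟩ := hant.tendsto_alternating_series_of_tendsto_zero (d_tendsto hx0 hxπ)
  -- identify l with 1 / sin x using even partial sums
  have hp : HasSum (fun j : ℕ => d (2 * j) - d (2 * j + 1)) (1 / Real.sin x) := by
    have h := (hasSum_csc hx0 hxπ).nat_add_neg_add_one
    refine h.congr_fun fun j => ?_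
    have e1 : x + 2 * ((-((j:ℤ) + 1) : ℤ) : ℝ) * π = -((2 * (j:ℝ) + 2) * π - x) := by
      push_cast; ring
    have e2 : x + (2 * ((-((j:ℤ) + 1) : ℤ) : ℝ) + 1) * π = -((2 * (j:ℝ) + 1) * π - x) := by
      push_cast; ring
    rw [e1, e2]
    simp only [hd, one_div, inv_neg]
    push_cast
    ring
  have heven : Tendsto (fun N : ℕ => ∑ n ∈ range (2 * N), (-1 : ℝ) ^ n * d n)
      atTop (nhds (1 / Real.sin x)) := by
    refine hp.tendsto_sum_nat.congr fun N => ?_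
    rw [sum_pair_eq]
  have htwo : Tendsto (fun N : ℕ => 2 * N) atTop atTop :=
    tendsto_atTop_mono (fun n => by simp only [id_eq]; omega) tendsto_id
  have hleven : Tendsto (fun N : ℕ => ∑ n ∈ range (2 * N), (-1 : ℝ) ^ n * d n)
      atTop (nhds l) := hl.comp htwo
  have hlval : l = 1 / Real.sin x := tendsto_nhds_unique hleven heven
  rw [hlval] at hl
  have h1 := hl.const_mul (Real.sin x)
  rw [mul_one_div, div_self hsin] at h1
  exact h1

lemma SB_bounds (hx0 : 0 < x) (hxπ : x < π) (N : ℕ) :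
    0 ≤ Real.sin x * ∑ n ∈ range N,
        (-1 : ℝ) ^ n * (1 / (x + (n : ℝ) * π) + 1 / (((n : ℝ) + 1) * π - x)) ∧
    Real.sin x * ∑ n ∈ range N,
        (-1 : ℝ) ^ n * (1 / (x + (n : ℝ) * π) + 1 / (((n : ℝ) + 1) * π - x)) ≤ 2 := by
  have pi0 := pi_pos
  have hsin : 0 < Real.sin x := sin_pos_of_pos_of_lt_pi hx0 hxπ
  obtain ⟨hb0, hb1⟩ := alt_sum_bounds N
    (fun n => 1 / (x + (n : ℝ) * π) + 1 / (((n : ℝ) + 1) * π - x))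
    (d_nonneg hx0 hxπ) (d_antitone hx0 hxπ)
  constructor
  · exact mul_nonneg hsin.le hb0
  · have hd0 : (1 : ℝ) / (x + (0 : ℕ) * π) + 1 / (((0 : ℕ) + 1) * π - x)
        = 1 / x + 1 / (π - x) := by norm_num
    rw [hd0] at hb1
    have h2 : Real.sin x * ∑ n ∈ range N,
        (-1 : ℝ) ^ n * (1 / (x + (n : ℝ) * π) + 1 / (((n : ℝ) + 1) * π - x))
        ≤ Real.sin x * (1 / x + 1 / (π - x)) := mul_le_mul_of_nonneg_left hb1 hsin.le
    have hs1 : Real.sin x ≤ x := Real.sin_le hx0.le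
    have hs2 : Real.sin x ≤ π - x := by
      have := Real.sin_le (x := π - x) (by linarith)
      rwa [sin_pi_sub] at this
    have hx' : 0 < π - x := by linarith
    have e1 : Real.sin x * (1 / x + 1 / (π - x)) = Real.sin x / x + Real.sin x / (π - x) := by
      rw [mul_add, mul_one_div, mul_one_div]
    have e2 : Real.sin x / x ≤ 1 := by rw [div_le_one hx0]; exact hs1
    have e3 : Real.sin x / (π - x) ≤ 1 := by rw [div_le_one hx']; exact hs2
    linarith [h2, e1.le]
    
end SB

end SinSqAux

open SinSqAux Finset

set_option maxHeartbeats 1000000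

/-- If `f` is continuous, `π`-periodic and symmetric about `π/2` on `[0, ∞)`, and both
improper integrals `∫₀^∞ (sin² x / x²) f x dx` and `∫₀^∞ (sin x / x) f x dx` exist,
then they are equal. -/
theorem integral_sin_sq_eq_integral_sin (f : ℝ → ℝ) (hf : Continuous f)
    (hper : ∀ x : ℝ, 0 ≤ x → f (x + π) = f x)
    (hsym : ∀ x : ℝ, 0 ≤ x → f (π - x) = f x)
    (I₂ I₁ : ℝ)
    (hI₂ : Tendsto (fun T : ℝ => ∫ x in (0:ℝ)..T, (Real.sin x / x) ^ 2 * f x)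
      atTop (nhds I₂))
    (hI₁ : Tendsto (fun T : ℝ => ∫ x in (0:ℝ)..T, (Real.sin x / x) * f x)
      atTop (nhds I₁)) :
    I₂ = I₁ := by
  have pi0 := pi_pos
  set g2 : ℝ → ℝ := fun x => (Real.sin x / x) ^ 2 * f x with hg2
  set g1 : ℝ → ℝ := fun x => (Real.sin x / x) * f x with hg1
  -- a bound for |f| on [0, π]
  obtain ⟨M, hM⟩ : ∃ M : ℝ, ∀ y ∈ Set.Icc (0 : ℝ) π, |f y| ≤ M := by
    obtain ⟨M, hM⟩ := (isCompact_Icc (a := (0:ℝ)) (b := π)).exists_bound_of_continuousOn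
      hf.continuousOn
    exact ⟨M, fun y hy => by simpa [Real.norm_eq_abs] using hM y hy⟩
  have hM0 : 0 ≤ M := le_trans (abs_nonneg _) (hM 0 ⟨le_refl 0, pi0.le⟩)
  -- iterated periodicity
  have hper' : ∀ n : ℕ, ∀ y : ℝ, 0 ≤ y → f (y + (n : ℝ) * π) = f y := by
    intro n
    induction n with
    | zero => intro y _; norm_num
    | succ n ih =>
      intro y hy
      have hnn : (0:ℝ) ≤ (n : ℝ) * π := by positivity
      have e : y + ((n : ℕ) + 1 : ℕ) * π = (y + (n : ℝ) * π) + π := by push_cast; ring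
      rw [e, hper _ (by linarith), ih y hy]
  -- |sin t / t| ≤ 1
  have hsinc : ∀ t : ℝ, |Real.sin t / t| ≤ 1 := by
    intro t
    rcases eq_or_ne t 0 with rfl | ht
    · simp
    · rw [abs_div, div_le_one (abs_pos.mpr ht)]
      exact (Real.abs_sin_lt_abs ht).le
  -- measurability of g1 g2
  have hmeas1 : Measurable g1 :=
    (Real.continuous_sin.measurable.div measurable_id).mul hf.measurable
  have hmeas2 : Measurable g2 :=
    ((Real.continuous_sin.measurable.div measurable_id).pow_const 2).mul hf.measurable
  -- integrability helper
  have hii : ∀ g : ℝ → ℝ, Measurable g → ∀ a b C : ℝ, (∀ y ∈ Set.uIoc a b, |g y| ≤ C) →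
      IntervalIntegrable g volume a b := by
    intro g hg a b C hC
    rw [intervalIntegrable_iff]
    apply Measure.integrableOn_of_bounded (M := C)
    · rw [Set.uIoc]; exact measure_Ioc_lt_top.ne
    · exact hg.aestronglyMeasurable
    · rw [ae_restrict_iff' measurableSet_uIoc]
      exact ae_of_all _ fun y hy => by rw [Real.norm_eq_abs]; exact hC y hy
  have hint_g : ∀ g : ℝ → ℝ, Measurable g → (∀ y, |g y| ≤ |f y|) →
      ∀ a b : ℝ, IntervalIntegrable g volume a b := by
    intro g hg hgf a b
    obtain ⟨C, hC⟩ := (isCompact_uIcc (a := a) (b := b)).exists_bound_of_continuousOn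
      hf.continuousOn
    apply hii g hg a b C
    intro y hy
    exact (hgf y).trans (by simpa [Real.norm_eq_abs] using hC y (Set.uIoc_subset_uIcc hy))
  have hb1 : ∀ y, |g1 y| ≤ |f y| := by
    intro y
    rw [hg1]
    simp only
    rw [abs_mul]
    calc |Real.sin y / y| * |f y| ≤ 1 * |f y| :=
      mul_le_mul_of_nonneg_right (hsinc y) (abs_nonneg _)
    _ = |f y| := one_mul _
  have hb2 : ∀ y, |g2 y| ≤ |f y| := by
    intro y
    rw [hg2]
    simp only
    rw [abs_mul, abs_pow]
    calc |Real.sin y / y| ^ 2 * |f y| ≤ 1 * |f y| := by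
          apply mul_le_mul_of_nonneg_right _ (abs_nonneg _)
          exact pow_le_one₀ (abs_nonneg _) (hsinc y)
    _ = |f y| := one_mul _
  have hint1 : ∀ a b : ℝ, IntervalIntegrable g1 volume a b := hint_g g1 hmeas1 hb1
  have hint2 : ∀ a b : ℝ, IntervalIntegrable g2 volume a b := hint_g g2 hmeas2 hb2
  -- limits along N π
  have hNπ : Tendsto (fun N : ℕ => (N : ℝ) * π) atTop atTop :=
    Tendsto.atTop_mul_const pi0 tendsto_natCast_atTop_atTop
  have h2' : Tendsto (fun N : ℕ => ∫ x in (0:ℝ)..((N:ℝ)*π), g2 x) atTop (nhds I₂) :=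
    hI₂.comp hNπ
  have h1' : Tendsto (fun N : ℕ => ∫ x in (0:ℝ)..((N:ℝ)*π), g1 x) atTop (nhds I₁) :=
    hI₁.comp hNπ
  have hE : Tendsto (fun N : ℕ => (∫ x in (0:ℝ)..((N:ℝ)*π), g2 x)
      - ∫ x in (0:ℝ)..((N:ℝ)*π), g1 x) atTop (nhds (I₂ - I₁)) := h2'.sub h1'
  -- the shifted integrands on [0, π]
  set p : ℕ → ℝ → ℝ := fun n x => (Real.sin x / (x + (n : ℝ) * π)) ^ 2 * f x with hp
  set q : ℕ → ℝ → ℝ := fun n x => (-1 : ℝ) ^ n * (Real.sin x / (x + (n : ℝ) * π)) * f x with hq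
  have hshift2 : ∀ n : ℕ, ∀ x ∈ Set.uIcc (0:ℝ) π, g2 (x + (n:ℝ) * π) = p n x := by
    intro n x hx
    rw [Set.uIcc_of_le pi0.le] at hx
    rw [hg2, hp]
    simp only
    rw [Real.sin_add_nat_mul_pi, hper' n x hx.1, mul_div_assoc, mul_pow]
    have he : ((-1:ℝ)^n)^2 = 1 := by rw [← pow_mul, mul_comm, pow_mul]; norm_num
    rw [he, one_mul]
  have hshift1 : ∀ n : ℕ, ∀ x ∈ Set.uIcc (0:ℝ) π, g1 (x + (n:ℝ) * π) = q n x := by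
    intro n x hx
    rw [Set.uIcc_of_le pi0.le] at hx
    rw [hg1, hq]
    simp only
    rw [Real.sin_add_nat_mul_pi, hper' n x hx.1, mul_div_assoc]
  -- splitting the long integral
  have hsplit : ∀ g : ℝ → ℝ, (∀ a b : ℝ, IntervalIntegrable g volume a b) →
      ∀ N : ℕ, (∫ x in (0:ℝ)..((N:ℝ)*π), g x)
        = ∑ n ∈ range N, ∫ x in (0:ℝ)..π, g (x + (n:ℝ)*π) := by
    intro g hg N
    have hadj := intervalIntegral.sum_integral_adjacent_intervals
      (a := fun k : ℕ => (k : ℝ) * π) (μ := volume) (n := N) (fun k _ => hg _ _)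
    simp only [Nat.cast_zero, zero_mul] at hadj
    rw [← hadj]
    apply Finset.sum_congr rfl
    intro n _
    rw [intervalIntegral.integral_comp_add_right g ((n:ℝ)*π)]
    congr 1 <;> push_cast <;> ring
  -- integrability of p n and q n on [0, π]
  have hratio : ∀ n : ℕ, ∀ y ∈ Set.uIoc (0:ℝ) π, |Real.sin y / (y + (n:ℝ)*π)| ≤ 1 := by
    intro n y hy
    rw [Set.uIoc_of_le pi0.le] at hy
    have hy0 : 0 < y := hy.1
    have hden : 0 < y + (n:ℝ)*π := by positivity
    have hs0 : 0 ≤ Real.sin y := Real.sin_nonneg_of_nonneg_of_le_pi hy0.le hy.2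
    have hs1 : Real.sin y ≤ y + (n:ℝ)*π := by
      have := Real.sin_le hy0.le
      have hnn : (0:ℝ) ≤ (n : ℝ) * π := by positivity
      linarith
    rw [abs_div, div_le_one (by rwa [abs_of_pos hden])]
    rw [abs_of_nonneg hs0, abs_of_pos hden]
    exact hs1
  have hmeasp : ∀ n : ℕ, Measurable (p n) := fun n =>
    ((Real.continuous_sin.measurable.div (measurable_id.add_const _)).pow_const 2).mul
      hf.measurable
  have hmeasq : ∀ n : ℕ, Measurable (q n) := fun n =>
    ((measurable_const.mul (Real.continuous_sin.measurable.div (measurable_id.add_const _))).mul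
      hf.measurable)
  have hpInt : ∀ n : ℕ, IntervalIntegrable (p n) volume 0 π := by
    intro n
    apply hii (p n) (hmeasp n) 0 π M
    intro y hy
    have hy' := hy
    rw [Set.uIoc_of_le pi0.le] at hy'
    rw [hp]
    simp only
    rw [abs_mul, abs_pow]
    calc |Real.sin y / (y + (n:ℝ)*π)| ^ 2 * |f y| ≤ 1 * |f y| := by
          apply mul_le_mul_of_nonneg_right _ (abs_nonneg _)
          exact pow_le_one₀ (abs_nonneg _) (hratio n y hy)
      _ = |f y| := one_mul _
      _ ≤ M := hM y ⟨hy'.1.le, hy'.2⟩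
  have hqInt : ∀ n : ℕ, IntervalIntegrable (q n) volume 0 π := by
    intro n
    apply hii (q n) (hmeasq n) 0 π M
    intro y hy
    have hy' := hy
    rw [Set.uIoc_of_le pi0.le] at hy'
    rw [hq]
    simp only
    rw [abs_mul, abs_mul, abs_pow, abs_neg, abs_one, one_pow, one_mul]
    calc |Real.sin y / (y + (n:ℝ)*π)| * |f y| ≤ 1 * |f y| :=
          mul_le_mul_of_nonneg_right (hratio n y hy) (abs_nonneg _)
      _ = |f y| := one_mul _
      _ ≤ M := hM y ⟨hy'.1.le, hy'.2⟩
  have hPhiInt : ∀ N : ℕ, IntervalIntegrable (fun x => ∑ n ∈ range N, (p n x - q n x))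
      volume 0 π := by
    intro N
    have hfun : (fun x : ℝ => ∑ n ∈ range N, (p n x - q n x))
        = ∑ n ∈ range N, (fun x => p n x - q n x) := by
      funext x
      rw [Finset.sum_apply]
    rw [hfun]
    exact IntervalIntegrable.sum (μ := volume) (a := (0:ℝ)) (b := π) (range N)
      (f := fun n x => p n x - q n x) fun n _ => (hpInt n).sub (hqInt n)
  -- the per-N identity
  have hEN : ∀ N : ℕ, (∫ x in (0:ℝ)..((N:ℝ)*π), g2 x) - (∫ x in (0:ℝ)..((N:ℝ)*π), g1 x)
      = ∫ x in (0:ℝ)..π, ∑ n ∈ range N, (p n x - q n x) := by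
    intro N
    rw [hsplit g2 hint2 N, hsplit g1 hint1 N]
    rw [Finset.sum_congr rfl (fun n _ => intervalIntegral.integral_congr (hshift2 n)),
      Finset.sum_congr rfl (fun n _ => intervalIntegral.integral_congr (hshift1 n))]
    rw [← Finset.sum_sub_distrib]
    rw [Finset.sum_congr rfl
      (fun n _ => (intervalIntegral.integral_sub (hpInt n) (hqInt n)).symm)]
    rw [← intervalIntegral.integral_finset_sum (fun n _ => (hpInt n).sub (hqInt n))]
  -- reflection
  have hrefl : ∀ N : ℕ, (∫ x in (0:ℝ)..π, ∑ n ∈ range N, (p n (π - x) - q n (π - x)))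
      = ∫ x in (0:ℝ)..π, ∑ n ∈ range N, (p n x - q n x) := by
    intro N
    have h := intervalIntegral.integral_comp_sub_left (a := 0) (b := π)
      (fun x => ∑ n ∈ range N, (p n x - q n x)) π
    rw [sub_self, sub_zero] at h
    exact h
  have hPhiReflInt : ∀ N : ℕ,
      IntervalIntegrable (fun x => ∑ n ∈ range N, (p n (π - x) - q n (π - x))) volume 0 π := by
    intro N
    have h := ((hPhiInt N).comp_sub_left π).symm
    rw [sub_self, sub_zero] at h
    exact h
  -- the symmetrized integrand
  set F : ℕ → ℝ → ℝ := fun N x => (∑ n ∈ range N, (p n x - q n x))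
    + ∑ n ∈ range N, (p n (π - x) - q n (π - x)) with hF
  have hFeq : ∀ N : ℕ, (∫ x in (0:ℝ)..π, F N x)
      = ((∫ x in (0:ℝ)..((N:ℝ)*π), g2 x) - ∫ x in (0:ℝ)..((N:ℝ)*π), g1 x)
        + ((∫ x in (0:ℝ)..((N:ℝ)*π), g2 x) - ∫ x in (0:ℝ)..((N:ℝ)*π), g1 x) := by
    intro N
    rw [hF]
    simp only
    rw [intervalIntegral.integral_add (hPhiInt N) (hPhiReflInt N), hrefl N, ← hEN N]
  -- pointwise identity on (0, π)
  have hptw : ∀ N : ℕ, ∀ x : ℝ, 0 < x → x < π → F N x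
      = f x * ((Real.sin x ^ 2 * ∑ n ∈ range N,
          (1 / (x + (n : ℝ) * π) ^ 2 + 1 / (((n : ℝ) + 1) * π - x) ^ 2))
        - Real.sin x * ∑ n ∈ range N,
          (-1 : ℝ) ^ n * (1 / (x + (n : ℝ) * π) + 1 / (((n : ℝ) + 1) * π - x))) := by
    intro N x hx0 hxπ
    have hsympi : f (π - x) = f x := hsym x hx0.le
    have hsinpi : Real.sin (π - x) = Real.sin x := Real.sin_pi_sub x
    rw [hF, hp, hq]
    simp only [hsinpi, hsympi]
    rw [Finset.mul_sum, Finset.mul_sum, ← Finset.sum_sub_distrib, Finset.mul_sum,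
      ← Finset.sum_add_distrib]
    apply Finset.sum_congr rfl
    intro n _
    rw [show (1:ℝ) / (x + (n:ℝ)*π)^2 = (1/(x + (n:ℝ)*π))^2 by rw [one_div_pow],
      show (1:ℝ) / (((n:ℝ)+1)*π - x)^2 = (1/(((n:ℝ)+1)*π - x))^2 by rw [one_div_pow]]
    ring
  -- dominated convergence
  have hae : ∀ᵐ x : ℝ ∂volume, x ≠ π := by
    have h0 : (volume : Measure ℝ) {π} = 0 := Real.volume_singleton
    rw [← MeasureTheory.compl_mem_ae_iff] at h0
    filter_upwards [h0] with x hx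
    simpa using hx
  have hFmeas : ∀ N : ℕ, Measurable (F N) := by
    intro N
    apply Measurable.add
    · apply Finset.measurable_sum
      intro n _
      exact (hmeasp n).sub (hmeasq n)
    · apply Finset.measurable_sum
      intro n _
      exact ((hmeasp n).comp (measurable_const.sub measurable_id)).sub
        ((hmeasq n).comp (measurable_const.sub measurable_id))
  have hW : Tendsto (fun N : ℕ => ∫ x in (0:ℝ)..π, F N x) atTop (nhds 0) := by
    have hdct : Tendsto (fun N : ℕ => ∫ x in (0:ℝ)..π, F N x) atTop
        (nhds (∫ x in (0:ℝ)..π, (0:ℝ))) := by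
      apply intervalIntegral.tendsto_integral_filter_of_dominated_convergence
        (bound := fun _ => M * 3)
      · exact Eventually.of_forall fun N => (hFmeas N).aestronglyMeasurable
      · apply Eventually.of_forall
        intro N
        filter_upwards [hae] with x hxne hxmem
        rw [Set.uIoc_of_le pi0.le] at hxmem
        have hx0 : 0 < x := hxmem.1
        have hxπ : x < π := lt_of_le_of_ne hxmem.2 hxne
        rw [Real.norm_eq_abs, hptw N x hx0 hxπ, abs_mul]
        have hA0 := SA_nonneg hx0 hxπ N
        have hA1 := SA_le_one hx0 hxπ N
        obtain ⟨hB0, hB2⟩ := SB_bounds hx0 hxπ N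
        have habs : |(Real.sin x ^ 2 * ∑ n ∈ range N,
            (1 / (x + (n : ℝ) * π) ^ 2 + 1 / (((n : ℝ) + 1) * π - x) ^ 2))
          - Real.sin x * ∑ n ∈ range N,
            (-1 : ℝ) ^ n * (1 / (x + (n : ℝ) * π) + 1 / (((n : ℝ) + 1) * π - x))| ≤ 3 := by
          rw [abs_le]
          constructor <;> linarith
        exact mul_le_mul (hM x ⟨hx0.le, hxπ.le⟩) habs (abs_nonneg _) hM0
      · exact intervalIntegrable_const
      · filter_upwards [hae] with x hxne hxmem
        rw [Set.uIoc_of_le pi0.le] at hxmem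
        have hx0 : 0 < x := hxmem.1
        have hxπ : x < π := lt_of_le_of_ne hxmem.2 hxne
        have h := ((tendsto_SA hx0 hxπ).sub (tendsto_SB hx0 hxπ)).const_mul (f x)
        rw [sub_self, mul_zero] at h
        exact h.congr fun N => (hptw N x hx0 hxπ).symm
    simpa using hdct
  -- conclude
  have hWE : Tendsto (fun N : ℕ =>
      ((∫ x in (0:ℝ)..((N:ℝ)*π), g2 x) - ∫ x in (0:ℝ)..((N:ℝ)*π), g1 x)
        + ((∫ x in (0:ℝ)..((N:ℝ)*π), g2 x) - ∫ x in (0:ℝ)..((N:ℝ)*π), g1 x))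
      atTop (nhds 0) := hW.congr fun N => hFeq N
  have := tendsto_nhds_unique (hE.add hE) hWE
  linarith
end

section
/- For every real α that is not an integer multiple of π, one has 1/sin α = 1/α + Σ_{m=1}^∞ (−1)^m (1/(α − mπ) + 1/(α + mπ)), where the series converges. -/
open Real

namespace OneDivSinAux

open MeasureTheory Filter Set Topology Complex

lemma integral_cos_c (c : ℝ) (hc : c ≠ 0) :
    ∫ x in (0:ℝ)..π, Real.cos (c * x) = Real.sin (c * π) / c := by
  have h := intervalIntegral.mul_integral_comp_mul_left (a := (0:ℝ)) (b := π)
      (f := Real.cos) (c := c)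
  rw [_root_.integral_cos] at h
  rw [eq_div_iff hc, mul_comm]
  simpa using h

lemma dirichlet (x : ℝ) (N : ℕ) :
    Real.sin (((N : ℝ) + 1/2) * x)
      = Real.sin (x/2) * (1 + 2 * ∑ m ∈ Finset.range N, Real.cos (((m : ℝ) + 1) * x)) := by
  induction N with
  | zero => rw [show (((0:ℕ):ℝ)+1/2)*x = x/2 by push_cast; ring]; simp
  | succ N ih =>
    have h := Real.sin_sub_sin (((N : ℝ) + 1 + 1/2) * x) (((N : ℝ) + 1/2) * x)
    rw [show (((N : ℝ) + 1 + 1/2) * x - ((N : ℝ) + 1/2) * x)/2 = x/2 by ring,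
        show (((N : ℝ) + 1 + 1/2) * x + ((N : ℝ) + 1/2) * x)/2 = ((N:ℝ)+1) * x by ring] at h
    rw [Finset.sum_range_succ]
    push_cast
    push_cast at ih
    nlinarith [h, ih]


lemma rl (g : ℝ → ℝ) (hg : IntegrableOn g (Ioc 0 π)) :
    Tendsto (fun N : ℕ => ∫ x in Ioc (0:ℝ) π, g x * Real.sin (((N : ℝ) + 1/2) * x))
      atTop (𝓝 0) := by
  set f : ℝ → ℂ := Set.indicator (Ioc 0 π) (fun x => (g x : ℂ)) with hf
  have hfi : Integrable f := by
    rw [hf, integrable_indicator_iff measurableSet_Ioc]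
    exact hg.ofReal
  set w : ℕ → ℝ := fun N => (((N : ℝ) + 1/2)) / (2 * π) with hw
  have hwtop : Tendsto w atTop atTop := by
    apply Tendsto.atTop_div_const (by positivity)
    exact tendsto_atTop_add_const_right _ _ tendsto_natCast_atTop_atTop
  have hco : Tendsto w atTop (Filter.cocompact ℝ) := by
    rw [cocompact_eq_atBot_atTop]
    exact hwtop.mono_right le_sup_right
  have key := (Real.zero_at_infty_fourier f).comp hco
  have him : Tendsto (fun N : ℕ => (FourierTransform.fourier f (w N)).im) atTop (𝓝 0) := by
    simpa [Function.comp_def] using (Complex.continuous_im.tendsto 0).comp key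
  have heval : ∀ N : ℕ, (FourierTransform.fourier f (w N)).im
      = - ∫ x in Ioc (0:ℝ) π, g x * Real.sin (((N : ℝ) + 1/2) * x) := by
    intro N
    rw [Real.fourier_real_eq_integral_exp_smul]
    have hint : Integrable (fun v : ℝ => Complex.exp (↑(-2 * π * v * w N) * Complex.I) • f v) := by
      apply (hfi.norm.const_mul 1).mono'
      · apply AEStronglyMeasurable.smul (f := fun v : ℝ => Complex.exp (↑(-2 * π * v * w N) * Complex.I)) _ hfi.1
        apply Continuous.aestronglyMeasurable
        exact Complex.continuous_exp.comp (by continuity)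
      · filter_upwards with v
        simp only [norm_smul, Complex.norm_exp]
        simp [Complex.ofReal_mul]
    have h2 := integral_im hint
    simp only [RCLike.im_to_complex] at h2
    rw [← h2, ← integral_neg, ← integral_indicator measurableSet_Ioc]
    congr 1
    ext v
    by_cases hv : v ∈ Ioc (0:ℝ) π
    · rw [Set.indicator_of_mem hv]
      have hfv : f v = (g v : ℂ) := Set.indicator_of_mem hv _
      rw [hfv]
      have harg : -2 * π * v * w N = -(((N : ℝ) + 1/2) * v) := by
        rw [hw]; field_simp
      rw [harg, smul_eq_mul]
      simp only [Complex.mul_im, Complex.exp_ofReal_mul_I_im, Complex.exp_ofReal_mul_I_re,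
        Complex.ofReal_im, Complex.ofReal_re, Real.sin_neg]
      ring
    · rw [Set.indicator_of_notMem hv]
      have hfv : f v = 0 := Set.indicator_of_notMem hv _
      simp [hfv]
  simp only [heval] at him
  simpa using him.neg


lemma G_integrable (β : ℝ) :
    IntegrableOn (fun x => (Real.cos (β * x) - 1) / Real.sin (x / 2)) (Ioc 0 π) := by
  set G : ℝ → ℝ := fun x => (Real.cos (β * x) - 1) / Real.sin (x / 2) with hG
  have hcont : ContinuousOn G (Icc 0 π) := by
    intro x hx
    rcases eq_or_ne x 0 with rfl | hx0
    · -- continuity at 0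
      have h1 : Tendsto (fun x : ℝ => (Real.cos (β * x) - 1) / x) (𝓝[≠] 0) (𝓝 0) := by
        have hd : HasDerivAt (fun x : ℝ => Real.cos (β * x)) 0 0 := by
          have := (Real.hasDerivAt_cos (β * 0)).comp 0 ((hasDerivAt_id 0).const_mul β)
          simp at this; exact this
        have := hasDerivAt_iff_tendsto_slope.mp hd
        simpa [slope_fun_def, Function.comp, div_eq_inv_mul] using this
      have h2 : Tendsto (fun x : ℝ => x / Real.sin (x / 2)) (𝓝[≠] 0) (𝓝 2) := by
        have hd : HasDerivAt (fun x : ℝ => Real.sin (x / 2)) (1/2) 0 := by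
          have := (Real.hasDerivAt_sin ((0:ℝ) / 2)).comp 0 ((hasDerivAt_id (0:ℝ)).div_const 2)
          simpa [Function.comp_def] using this
        have h3 := hasDerivAt_iff_tendsto_slope.mp hd
        have h4 : Tendsto (fun x : ℝ => Real.sin (x / 2) / x) (𝓝[≠] 0) (𝓝 (1/2)) := by
          simpa [slope_fun_def, Function.comp, div_eq_inv_mul] using h3
        have h5 := h4.inv₀ (by norm_num)
        simpa [inv_div] using h5
      have hmul : Tendsto (fun x : ℝ => ((Real.cos (β * x) - 1) / x) * (x / Real.sin (x / 2)))
          (𝓝[≠] 0) (𝓝 0) := by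
        simpa using h1.mul h2
      have heq : ∀ x : ℝ, x ≠ 0 →
          ((Real.cos (β * x) - 1) / x) * (x / Real.sin (x / 2)) = G x := by
        intro x hx
        rw [hG]
        field_simp
      have hG0 : Tendsto G (𝓝[≠] 0) (𝓝 0) := by
        apply hmul.congr'
        filter_upwards [self_mem_nhdsWithin] with x hx using heq x hx
      have : ContinuousWithinAt G ({(0:ℝ)}ᶜ ∪ {0}) 0 := by
        apply ContinuousWithinAt.union
        · unfold ContinuousWithinAt
          rw [show G 0 = 0 by simp [hG]]
          exact hG0
        · exact continuousWithinAt_singleton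
      refine this.mono ?_
      intro y _
      by_cases h : y = 0 <;> simp [h]
    · -- continuity away from 0
      have hxpos : 0 < x := lt_of_le_of_ne hx.1 (Ne.symm hx0)
      have hsin : Real.sin (x / 2) ≠ 0 := by
        apply ne_of_gt
        apply Real.sin_pos_of_pos_of_lt_pi (by linarith)
        linarith [hx.2, Real.pi_pos]
      apply ContinuousWithinAt.div
      · exact ((Real.continuous_cos.comp (continuous_const.mul continuous_id)).sub
          continuous_const).continuousWithinAt
      · exact (Real.continuous_sin.comp (continuous_id.div_const 2)).continuousWithinAt
      · exact hsin
  exact (hcont.integrableOn_compact isCompact_Icc).mono_set Ioc_subset_Icc_self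


end OneDivSinAux

open OneDivSinAux MeasureTheory Filter Set Topology

/-- Partial fraction expansion of `1 / sin α`: for `α` not an integer multiple of `π`,
`1 / sin α = 1/α + ∑_{m=1}^∞ (-1)^m (1/(α - mπ) + 1/(α + mπ))`. -/
theorem one_div_sin_eq_sum (α : ℝ) (hα : ∀ k : ℤ, α ≠ k * π) :
    HasSum
      (fun m : ℕ => (-1 : ℝ) ^ (m + 1) *
        (1 / (α - (m + 1 : ℕ) * π) + 1 / (α + (m + 1 : ℕ) * π)))
      (1 / Real.sin α - 1 / α) := by
  have hπ : (0:ℝ) < π := Real.pi_pos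
  have hπ' : (π:ℝ) ≠ 0 := ne_of_gt hπ
  set f : ℕ → ℝ := fun m => (-1 : ℝ) ^ (m + 1) *
      (1 / (α - (m + 1 : ℕ) * π) + 1 / (α + (m + 1 : ℕ) * π)) with hf
  have hsin : Real.sin α ≠ 0 := by
    intro h
    rcases Real.sin_eq_zero_iff.mp h with ⟨n, hn⟩
    exact hα n hn.symm
  have hα0 : α ≠ 0 := by
    intro h; exact hα 0 (by simp [h])
  have hsub : ∀ k : ℤ, α - k * π ≠ 0 := by
    intro k h
    exact hα k (by linarith [sub_eq_zero.mp h])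
  have hadd : ∀ k : ℤ, α + k * π ≠ 0 := by
    intro k h
    apply hα (-k)
    push_cast
    linarith
  set β : ℝ := α / π with hβ
  have hβ0 : β ≠ 0 := div_ne_zero hα0 hπ'
  -- the term-by-term integral computation
  have hterm : ∀ k : ℕ, 1 ≤ k →
      (∫ x in (0:ℝ)..π, 2 * (Real.cos (β * x) * Real.cos ((k:ℝ) * x)))
        = (-1:ℝ)^k * Real.sin α * (π / (α - k * π) + π / (α + k * π)) := by
    intro k hk
    have hsubk : α - (k:ℝ) * π ≠ 0 := by exact_mod_cast hsub k
    have haddk : α + (k:ℝ) * π ≠ 0 := by exact_mod_cast hadd k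
    have hc1 : β - k ≠ 0 := by
      intro h
      apply hsubk
      have : β = k := by linarith
      rw [hβ] at this
      field_simp at this
      linarith
    have hc2 : β + k ≠ 0 := by
      intro h
      apply haddk
      have : β = -k := by linarith
      rw [hβ] at this
      field_simp at this
      linarith
    have heq : ∀ x : ℝ, 2 * (Real.cos (β * x) * Real.cos ((k:ℝ) * x))
        = Real.cos ((β - k) * x) + Real.cos ((β + k) * x) := by
      intro x
      have := Real.two_mul_cos_mul_cos (β * x) ((k:ℝ) * x)
      rw [show β * x - (k:ℝ) * x = (β - k) * x by ring,
          show β * x + (k:ℝ) * x = (β + k) * x by ring] at this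
      linarith
    rw [intervalIntegral.integral_congr (g := fun x =>
        Real.cos ((β - k) * x) + Real.cos ((β + k) * x)) (fun x _ => heq x)]
    rw [intervalIntegral.integral_add
        (Continuous.intervalIntegrable (by fun_prop) _ _)
        (Continuous.intervalIntegrable (by fun_prop) _ _)]
    rw [integral_cos_c _ hc1, integral_cos_c _ hc2]
    have e1 : (β - k) * π = α - k * π := by rw [hβ]; field_simp
    have e2 : (β + k) * π = α + k * π := by rw [hβ]; field_simp
    have s1 : Real.sin (α - (k:ℝ) * π) = (-1:ℝ)^k * Real.sin α := by
      have := Real.sin_add_int_mul_pi α (-(k:ℤ))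
      push_cast at this
      rw [show α + -(k:ℝ) * π = α - k * π by ring] at this
      rw [this]
      congr 1
      rw [zpow_neg, zpow_natCast]
      exact inv_eq_of_mul_eq_one_left (by rw [← pow_add]; exact Even.neg_one_pow ⟨k, by ring⟩)
    have s2 : Real.sin (α + (k:ℝ) * π) = (-1:ℝ)^k * Real.sin α := by
      have := Real.sin_add_int_mul_pi α (k:ℤ)
      push_cast at this
      rw [this, zpow_natCast]
    have hb1 : β - k = (α - k*π)/π := by rw [hβ]; field_simp
    have hb2 : β + k = (α + k*π)/π := by rw [hβ]; field_simp
    rw [e1, e2, s1, s2, hb1, hb2]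
    rw [div_div_eq_mul_div, div_div_eq_mul_div]
    field_simp
  -- integral of the Dirichlet kernel
  have hK : ∀ N : ℕ,
      (∫ x in (0:ℝ)..π, (1 + 2 * ∑ m ∈ Finset.range N, Real.cos (((m:ℝ) + 1) * x))) = π := by
    intro N
    rw [intervalIntegral.integral_add intervalIntegrable_const
        (Continuous.intervalIntegrable (by fun_prop) _ _)]
    rw [intervalIntegral.integral_const_mul]
    rw [intervalIntegral.integral_finset_sum
        (fun m _ => Continuous.intervalIntegrable (by fun_prop) _ _)]
    have hz : ∀ m : ℕ, (∫ x in (0:ℝ)..π, Real.cos (((m:ℝ) + 1) * x)) = 0 := by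
      intro m
      rw [integral_cos_c ((m:ℝ) + 1) (by positivity)]
      have : (((m:ℝ) + 1)) * π = ((m + 1 : ℕ) : ℝ) * π := by push_cast; ring
      rw [this]
      rw [Real.sin_nat_mul_pi]
      simp
    simp [hz]
  -- the main finite identity
  have hI : ∀ N : ℕ,
      (∫ x in (0:ℝ)..π, Real.cos (β * x) *
          (1 + 2 * ∑ m ∈ Finset.range N, Real.cos (((m:ℝ) + 1) * x)))
        = Real.sin α * π * (1/α + ∑ m ∈ Finset.range N, f m) := by
    intro N
    have heq : ∀ x : ℝ, Real.cos (β * x) *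
        (1 + 2 * ∑ m ∈ Finset.range N, Real.cos (((m:ℝ) + 1) * x))
        = Real.cos (β * x) + ∑ m ∈ Finset.range N,
            2 * (Real.cos (β * x) * Real.cos (((m:ℝ) + 1) * x)) := by
      intro x
      rw [mul_add, mul_one, Finset.mul_sum, Finset.mul_sum]
      congr 1
      refine Finset.sum_congr rfl fun m _ => by ring
    rw [intervalIntegral.integral_congr (g := fun x => Real.cos (β * x) +
        ∑ m ∈ Finset.range N, 2 * (Real.cos (β * x) * Real.cos (((m:ℝ) + 1) * x)))
        (fun x _ => heq x)]
    rw [intervalIntegral.integral_add (Continuous.intervalIntegrable (by fun_prop) _ _)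
        (Continuous.intervalIntegrable (by fun_prop) _ _)]
    rw [intervalIntegral.integral_finset_sum
        (fun m _ => Continuous.intervalIntegrable (by fun_prop) _ _)]
    have hterm' : ∀ m : ℕ, (∫ x in (0:ℝ)..π,
        2 * (Real.cos (β * x) * Real.cos (((m:ℝ) + 1) * x)))
        = Real.sin α * π * f m := by
      intro m
      have h := hterm (m + 1) (Nat.le_add_left 1 m)
      push_cast at h
      rw [h, hf]
      push_cast
      ring
    rw [Finset.sum_congr rfl fun m _ => hterm' m]
    rw [integral_cos_c β hβ0, show β * π = α from by rw [hβ]; field_simp]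
    have hone : Real.sin α / β = Real.sin α * π * (1/α) := by
      rw [hβ]
      field_simp
    rw [hone, mul_add, Finset.mul_sum]
  -- the splitting of the integral
  have hsplit : ∀ N : ℕ,
      (∫ x in (0:ℝ)..π, Real.cos (β * x) *
          (1 + 2 * ∑ m ∈ Finset.range N, Real.cos (((m:ℝ) + 1) * x)))
        = π + ∫ x in Ioc (0:ℝ) π,
            ((Real.cos (β * x) - 1) / Real.sin (x/2)) * Real.sin (((N:ℝ) + 1/2) * x) := by
    intro N
    have h1 : (∫ x in (0:ℝ)..π, Real.cos (β * x) *
          (1 + 2 * ∑ m ∈ Finset.range N, Real.cos (((m:ℝ) + 1) * x)))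
        = (∫ x in (0:ℝ)..π, (1 + 2 * ∑ m ∈ Finset.range N, Real.cos (((m:ℝ) + 1) * x)))
          + ∫ x in (0:ℝ)..π, (Real.cos (β * x) - 1) *
              (1 + 2 * ∑ m ∈ Finset.range N, Real.cos (((m:ℝ) + 1) * x)) := by
      rw [← intervalIntegral.integral_add (Continuous.intervalIntegrable (by fun_prop) _ _)
          (Continuous.intervalIntegrable (by fun_prop) _ _)]
      exact intervalIntegral.integral_congr fun x _ => by ring
    rw [h1, hK N]
    congr 1
    rw [intervalIntegral.integral_of_le hπ.le]
    apply MeasureTheory.setIntegral_congr_fun measurableSet_Ioc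
    intro x hx
    have hs : Real.sin (x/2) ≠ 0 := by
      apply ne_of_gt
      apply Real.sin_pos_of_pos_of_lt_pi (by linarith [hx.1])
      linarith [hx.2, hπ]
    have hd := dirichlet x N
    beta_reduce
    rw [hd]
    field_simp
  -- the limit
  have hlim : Tendsto (fun N : ℕ => ∫ x in (0:ℝ)..π, Real.cos (β * x) *
      (1 + 2 * ∑ m ∈ Finset.range N, Real.cos (((m:ℝ) + 1) * x))) atTop (𝓝 π) := by
    simp only [hsplit]
    have h0 := rl (fun x => (Real.cos (β * x) - 1) / Real.sin (x/2)) (G_integrable β)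
    simpa using tendsto_const_nhds.add h0
  -- convergence of the partial sums
  have hSN : ∀ N : ℕ, (∑ m ∈ Finset.range N, f m)
      = (∫ x in (0:ℝ)..π, Real.cos (β * x) *
          (1 + 2 * ∑ m ∈ Finset.range N, Real.cos (((m:ℝ) + 1) * x))) / (Real.sin α * π)
        - 1/α := by
    intro N
    rw [hI N]
    field_simp
    ring
  have htend : Tendsto (fun N : ℕ => ∑ m ∈ Finset.range N, f m) atTop
      (𝓝 (1 / Real.sin α - 1/α)) := by
    simp only [hSN]
    have h2 := (hlim.div_const (Real.sin α * π)).sub_const (1/α)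
    have h3 : π / (Real.sin α * π) = 1 / Real.sin α := by
      rw [mul_comm, div_mul_eq_div_div, div_self hπ']
    rw [h3] at h2
    exact h2
  -- summability
  have hsum : Summable f := by
    apply Summable.of_norm_bounded_eventually_nat
        (g := fun m => 8 * |α| / (((m:ℝ) + 1)^2 * π^2))
    · have h0 : Summable (fun m : ℕ => 1 / ((m:ℝ) + 1)^2) := by
        have h1 := (summable_nat_add_iff 1).mpr
          ((Real.summable_one_div_nat_pow (p := 2)).mpr one_lt_two)
        apply h1.congr
        intro n
        push_cast
        ring
      apply (h0.mul_left (8 * |α| / π^2)).congr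
      intro m
      field_simp
    · have hev : ∀ᶠ m : ℕ in atTop, 2 * |α| ≤ ((m:ℝ) + 1) * π := by
        have ht : Tendsto (fun m : ℕ => ((m:ℝ) + 1) * π) atTop atTop := by
          apply Tendsto.atTop_mul_const hπ
          exact tendsto_atTop_add_const_right _ _ tendsto_natCast_atTop_atTop
        exact ht.eventually_ge_atTop _
      filter_upwards [hev] with m hm
      set k : ℝ := (m:ℝ) + 1 with hk
      clear_value k
      have hkpos : 0 < k := by rw [hk]; positivity
      have hsubk : α - k * π ≠ 0 := by
        have := hsub (m + 1)
        push_cast at this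
        rw [hk]
        exact this
      have haddk : α + k * π ≠ 0 := by
        have := hadd (m + 1)
        push_cast at this
        rw [hk]
        exact this
      have hcomb : 1 / (α - k * π) + 1 / (α + k * π)
          = 2 * α / ((α - k * π) * (α + k * π)) := by
        field_simp
        ring
      have hb1 : k * π / 2 ≤ |α - k * π| := by
        rw [abs_sub_comm]
        have h5 : |k * π| - |α| ≤ |k * π - α| := abs_sub_abs_le_abs_sub _ _
        rw [abs_of_pos (by positivity)] at h5
        have h6 : |α| ≤ k * π / 2 := by linarith
        linarith
      have hb2 : k * π / 2 ≤ |α + k * π| := by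
        have h5 : |k * π| - |α| ≤ |k * π + α| := by
          have := abs_sub_abs_le_abs_sub (k * π) (-α)
          simpa [sub_neg_eq_add] using this
        rw [abs_of_pos (by positivity)] at h5
        have h6 : |α| ≤ k * π / 2 := by linarith
        rw [show α + k * π = k * π + α by ring]
        linarith
      have hnorm : ‖f m‖ = 2 * |α| / (|α - k * π| * |α + k * π|) := by
        rw [hf]
        simp only [Real.norm_eq_abs]
        push_cast
        rw [show ((m:ℝ) + 1) = k from hk.symm, abs_mul, abs_pow, abs_neg, abs_one, one_pow, one_mul]
        rw [hcomb, abs_div, abs_mul, abs_mul]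
        norm_num
      rw [hnorm]
      have hprod : (k * π / 2) * (k * π / 2) ≤ |α - k * π| * |α + k * π| :=
        mul_le_mul hb1 hb2 (by positivity) (abs_nonneg _)
      have hgoal : 2 * |α| / (|α - k * π| * |α + k * π|)
          ≤ 2 * |α| / ((k * π / 2) * (k * π / 2)) := by
        apply div_le_div_of_nonneg_left (by positivity) (by positivity) hprod
      apply hgoal.trans
      rw [show (2:ℝ) * |α| / ((k * π / 2) * (k * π / 2)) = 8 * |α| / (k^2 * π^2) from by
        field_simp; ring]
  -- conclusion
  have h1 := hsum.hasSum
  have h2 := h1.tendsto_sum_nat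
  have h3 : (∑' m, f m) = 1 / Real.sin α - 1/α := tendsto_nhds_unique h2 htend
  rw [← h3]
  exact h1
end

section
/- For every real α that is not an integer multiple of π, one has 1/sin²α = 1/α² + Σ_{m=1}^∞ (1/(α − mπ)² + 1/(α + mπ)²); equivalently, 1/sin²α = Σ_{m∈ℤ} 1/(α + mπ)², where the series converges absolutely. -/
open Real
open Filter

set_option maxHeartbeats 1000000

lemma aux_lower {t : ℝ} (h0 : 0 < t) (h2 : t ≤ π / 2) :
    1 / t ^ 2 ≤ 1 / Real.sin t ^ 2 := by
  have hπ : t < π := lt_of_le_of_lt h2 (by linarith [pi_pos])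
  have hs : 0 < Real.sin t := Real.sin_pos_of_pos_of_lt_pi h0 hπ
  have hle : Real.sin t ≤ t := le_of_lt (Real.sin_lt h0)
  have := pow_le_pow_left₀ hs.le hle 2
  exact one_div_le_one_div_of_le (by positivity) this

lemma aux_upper {t : ℝ} (h0 : 0 < t) (h2 : t ≤ π / 2) :
    1 / Real.sin t ^ 2 ≤ 1 / t ^ 2 + 3 := by
  have hπ : t < π := lt_of_le_of_lt h2 (by linarith [pi_pos])
  have hs : 0 < Real.sin t := Real.sin_pos_of_pos_of_lt_pi h0 hπ
  rcases le_or_gt t 1 with h1 | h1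
  · have hc : t - t ^ 3 / 4 < Real.sin t := by linarith [Real.sin_gt_sub_cube h0, pow_pos h0 3]
    have ht2 : t ^ 2 ≤ 1 := by nlinarith
    have ht3 : t ^ 3 ≤ t := by nlinarith [mul_le_mul_of_nonneg_left ht2 h0.le]
    have hpos : 0 < t - t ^ 3 / 4 := by nlinarith
    have hsq : (t - t ^ 3 / 4) ^ 2 ≤ Real.sin t ^ 2 := pow_le_pow_left₀ hpos.le hc.le 2
    rw [div_add' _ _ _ (by positivity), div_le_div_iff₀ (by positivity) (by positivity)]
    nlinarith [hsq, ht2, sq_nonneg t, mul_pos h0 h0, sq_nonneg (t - t^3/4),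
      mul_le_mul_of_nonneg_left ht2 (mul_pos h0 h0).le,
      mul_le_mul_of_nonneg_left ht2 (mul_pos (mul_pos h0 h0) (mul_pos h0 h0)).le]
  · have hms := Real.mul_le_sin h0.le h2
    rw [div_mul_eq_mul_div, div_le_iff₀ pi_pos] at hms
    have hπ4 : π ≤ 3.15 := by linarith [Real.pi_lt_d2]
    have h1s : 1 / Real.sin t ^ 2 ≤ π ^ 2 / (4 * t ^ 2) := by
      rw [div_le_div_iff₀ (by positivity) (by positivity)]
      nlinarith [mul_le_mul hms hms (by positivity) (mul_nonneg hs.le pi_pos.le)]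
    have hkey : (1 / t ^ 2 + 3) * (4 * t ^ 2) = 4 + 12 * t ^ 2 := by
      field_simp; ring
    have h2s : π ^ 2 / (4 * t ^ 2) ≤ 1 / t ^ 2 + 3 := by
      rw [div_le_iff₀ (by positivity), hkey]
      nlinarith
    linarith

lemma aux_double {x : ℝ} (hx : Real.sin x ≠ 0) :
    1 / Real.sin x ^ 2
      = (1/4) * (1 / Real.sin (x/2) ^ 2 + 1 / Real.sin (x/2 + π/2) ^ 2) := by
  have hs2 : Real.sin x = 2 * Real.sin (x/2) * Real.cos (x/2) := by
    rw [← Real.sin_two_mul]; ring_nf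
  have hc : Real.sin (x/2 + π/2) = Real.cos (x/2) := Real.sin_add_pi_div_two _
  have h1 : Real.sin (x/2) ≠ 0 := fun h => hx (by rw [hs2, h]; ring)
  have h2 : Real.cos (x/2) ≠ 0 := fun h => hx (by rw [hs2, h]; ring)
  rw [hc, hs2]
  field_simp
  nlinarith [Real.sin_sq_add_cos_sq (x/2)]

lemma sum_range_int (g : ℤ → ℝ) (a : ℤ) (N : ℕ) :
    ∑ j ∈ Finset.range N, g (a + j) = ∑ i ∈ Finset.Ico a (a + N), g i := by
  refine Finset.sum_nbij' (fun j => a + (j:ℤ)) (fun i => (i - a).toNat) ?_ ?_ ?_ ?_ ?_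
  · intro j hj
    simp only [Finset.mem_range] at hj
    simp only [Finset.mem_Ico]
    omega
  · intro i hi
    simp only [Finset.mem_Ico] at hi
    simp only [Finset.mem_range]
    omega
  · intro j hj; simp only [Finset.mem_range] at hj; simp
  · intro i hi; simp only [Finset.mem_Ico] at hi; simp; omega
  · intro j hj; rfl

lemma aux_iter {β : ℝ} (h0 : 0 < β) (h1 : β < π) :
    ∀ n : ℕ, 1 / Real.sin β ^ 2
      = ∑ j ∈ Finset.range (2 ^ n), (1 / 4 ^ n) * (1 / Real.sin ((β + j * π) / 2 ^ n) ^ 2)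
  | 0 => by simp
  | (n+1) => by
    rw [aux_iter h0 h1 n]
    have h2e : (2:ℕ) ^ (n+1) = 2 ^ n + 2 ^ n := by rw [pow_succ]; ring
    rw [h2e, Finset.sum_range_add, ← Finset.sum_add_distrib]
    refine Finset.sum_congr rfl fun j hj => ?_
    have hjn : j < 2 ^ n := Finset.mem_range.mp hj
    have hjr : (j:ℝ) ≤ 2 ^ n - 1 := by
      have h := Nat.le_sub_one_of_lt hjn
      have : (j:ℝ) ≤ ((2^n - 1 : ℕ) : ℝ) := by exact_mod_cast h
      have h1p : (1:ℕ) ≤ 2 ^ n := Nat.one_le_two_pow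
      rw [Nat.cast_sub h1p] at this
      push_cast at this ⊢
      linarith
    set x := (β + j * π) / 2 ^ n with hxdef
    have hp : (0:ℝ) < 2 ^ n := by positivity
    have hx0 : 0 < x := div_pos (by positivity) hp
    have hxπ : x < π := by
      rw [hxdef, div_lt_iff₀ hp]
      nlinarith [pi_pos, mul_le_mul_of_nonneg_right hjr pi_pos.le]
    have hsx : Real.sin x ≠ 0 := (Real.sin_pos_of_pos_of_lt_pi hx0 hxπ).ne'
    rw [aux_double hsx]
    have e1 : x / 2 = (β + j * π) / 2 ^ (n+1) := by rw [hxdef, pow_succ]; ring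
    have e2 : x / 2 + π / 2 = (β + ((2^n + j : ℕ) : ℝ) * π) / 2 ^ (n+1) := by
      rw [hxdef]; push_cast; rw [pow_succ]; field_simp; ring
    rw [e2, e1]
    push_cast
    ring

lemma aux_term {w : ℝ} {n : ℕ} (hw : 0 < w) (hw2 : w ≤ 2 ^ n * π) :
    1 / w ^ 2 ≤ (1 / 4 ^ (n+1)) * (1 / Real.sin (w / 2 ^ (n+1)) ^ 2) ∧
      (1 / 4 ^ (n+1)) * (1 / Real.sin (w / 2 ^ (n+1)) ^ 2) ≤ 1 / w ^ 2 + 3 / 4 ^ (n+1) := by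
  have hp : (0:ℝ) < 2 ^ (n+1) := by positivity
  have h4 : ((2:ℝ) ^ (n+1)) ^ 2 = 4 ^ (n+1) := by
    rw [← pow_mul, mul_comm, pow_mul]; norm_num
  set t := w / 2 ^ (n+1) with htdef
  have ht0 : 0 < t := div_pos hw hp
  have ht2 : t ≤ π / 2 := by
    rw [htdef, div_le_div_iff₀ hp (by norm_num)]
    calc w * 2 ≤ 2 ^ n * π * 2 := by nlinarith
    _ = π * 2 ^ (n+1) := by rw [pow_succ]; ring
  have hident : 1 / w ^ 2 = (1 / 4 ^ (n+1)) * (1 / t ^ 2) := by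
    rw [htdef, div_pow, h4]
    field_simp
  have h40 : (0:ℝ) < 4 ^ (n+1) := by positivity
  constructor
  · rw [hident]
    have := aux_lower ht0 ht2
    have h14 : (0:ℝ) ≤ 1 / 4 ^ (n+1) := by positivity
    nlinarith
  · rw [hident]
    have := aux_upper ht0 ht2
    have h14 : (0:ℝ) ≤ 1 / 4 ^ (n+1) := by positivity
    calc (1 / 4 ^ (n+1)) * (1 / Real.sin t ^ 2) ≤ (1 / 4 ^ (n+1)) * (1 / t ^ 2 + 3) := by
          nlinarith
    _ = 1 / 4 ^ (n+1) * (1 / t ^ 2) + 3 / 4 ^ (n+1) := by ring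

lemma aux_summable {β : ℝ} (h0 : 0 < β) (h1 : β < π) :
    Summable (fun m : ℤ => 1 / (β + m * π) ^ 2) := by
  have hπ := Real.pi_pos
  have hbase : Summable (fun n : ℕ => 1 / ((n:ℝ) + 1) ^ 2) := by
    have h := Real.summable_one_div_nat_pow.mpr (by norm_num : 1 < 2)
    have h2 := (summable_nat_add_iff (f := fun n : ℕ => 1 / (n:ℝ) ^ 2) 1).mpr h
    refine h2.congr fun n => by push_cast; ring_nf
  have key : ∀ c : ℝ, 0 < c →
      Summable (fun n : ℕ => 1 / (c * ((n:ℝ) + 1)) ^ 2) := by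
    intro c hc
    refine (hbase.mul_left (1 / c ^ 2)).congr fun n => ?_
    rw [mul_pow]; field_simp
  have hpos : Summable (fun n : ℕ => 1 / (β + (n:ℝ) * π) ^ 2) := by
    refine (summable_nat_add_iff 1).mp ?_
    refine Summable.of_nonneg_of_le (fun n => by positivity) (fun n => ?_) (key π hπ)
    have hd : π * ((n:ℝ) + 1) ≤ β + ((n:ℕ) + 1 : ℕ) * π := by push_cast; nlinarith
    have hdp : (0:ℝ) < π * ((n:ℝ) + 1) := by positivity
    exact one_div_le_one_div_of_le (by positivity) (pow_le_pow_left₀ hdp.le hd 2)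
  have hneg : Summable (fun n : ℕ => 1 / (β - (n:ℝ) * π) ^ 2) := by
    refine (summable_nat_add_iff 1).mp ?_
    refine Summable.of_nonneg_of_le (fun n => by positivity) (fun n => ?_)
      (key (π - β) (by linarith))
    have habs : (β - ((n:ℕ) + 1 : ℕ) * π) ^ 2 = (((n:ℝ) + 1) * π - β) ^ 2 := by
      push_cast; ring
    have hd : (π - β) * ((n:ℝ) + 1) ≤ ((n:ℝ) + 1) * π - β := by nlinarith
    have hdp : (0:ℝ) < (π - β) * ((n:ℝ) + 1) := mul_pos (by linarith) (by positivity)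
    rw [habs]
    exact one_div_le_one_div_of_le (pow_pos hdp 2) (pow_le_pow_left₀ hdp.le hd 2)
  refine Summable.of_nat_of_neg (hpos.congr fun n => by norm_num) (hneg.congr fun n => ?_)
  push_cast
  ring_nf

lemma aux_beta {β : ℝ} (h0 : 0 < β) (h1 : β < π) :
    HasSum (fun m : ℤ => 1 / (β + m * π) ^ 2) (1 / Real.sin β ^ 2) := by
  have hπ := Real.pi_pos
  set f : ℤ → ℝ := fun m => 1 / (β + m * π) ^ 2 with hf
  have hsum := aux_summable h0 h1
  set L := 1 / Real.sin β ^ 2 with hL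
  set S : ℕ → ℝ := fun n => ∑ i ∈ Finset.Ico (-(2 ^ n : ℤ)) (2 ^ n), f i with hS
  have key : ∀ n : ℕ, S n ≤ L ∧ L ≤ S n + 3 / 2 ^ (n + 1) := by
    intro n
    set T : ℕ → ℝ :=
      fun j => (1 / 4 ^ (n+1)) * (1 / Real.sin ((β + j * π) / 2 ^ (n+1)) ^ 2) with hT
    have h2e : (2:ℕ) ^ (n+1) = 2 ^ n + 2 ^ n := by rw [pow_succ]; ring
    have hiter : L = (∑ j ∈ Finset.range (2 ^ n), T j)
        + ∑ j ∈ Finset.range (2 ^ n), T (2 ^ n + j) := by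
      rw [hL, aux_iter h0 h1 (n+1), h2e, Finset.sum_range_add]
    have hIco : Finset.Ico (-(2 ^ n : ℤ)) (2 ^ n)
        = Finset.Ico (-(2 ^ n : ℤ)) (-(2 ^ n : ℤ) + ((2 ^ (n+1) : ℕ) : ℤ)) := by
      congr 1; push_cast; ring
    have hsplit : S n = (∑ j ∈ Finset.range (2 ^ n), f (-(2 ^ n : ℤ) + j))
        + ∑ j ∈ Finset.range (2 ^ n), f (-(2 ^ n : ℤ) + (2 ^ n + j : ℕ)) := by
      rw [hS]
      simp only
      rw [hIco, ← sum_range_int f (-(2 ^ n : ℤ)) (2 ^ (n+1)), h2e, Finset.sum_range_add]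
    -- per-term bounds, second half of bisection sum ↔ positive indices
    have ha : ∀ j ∈ Finset.range (2 ^ n),
        f (-(2 ^ n : ℤ) + (2 ^ n + j : ℕ)) ≤ T j ∧
          T j ≤ f (-(2 ^ n : ℤ) + (2 ^ n + j : ℕ)) + 3 / 4 ^ (n+1) := by
      intro j hj
      have hjn : j < 2 ^ n := Finset.mem_range.mp hj
      have hjr : (j:ℝ) ≤ 2 ^ n - 1 := by
        have h := Nat.le_sub_one_of_lt hjn
        have h2 : (j:ℝ) ≤ ((2 ^ n - 1 : ℕ) : ℝ) := by exact_mod_cast h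
        rw [Nat.cast_sub Nat.one_le_two_pow] at h2
        push_cast at h2 ⊢; linarith
      have hw : (0:ℝ) < β + j * π := by positivity
      have hw2 : β + (j:ℝ) * π ≤ 2 ^ n * π := by nlinarith
      have hfval : f (-(2 ^ n : ℤ) + (2 ^ n + j : ℕ)) = 1 / (β + (j:ℝ) * π) ^ 2 := by
        rw [hf]; push_cast; ring_nf
      obtain ⟨l, u⟩ := aux_term hw hw2
      rw [hfval, hT]
      exact ⟨l, u⟩
    have hb : ∀ j ∈ Finset.range (2 ^ n),
        f (-(2 ^ n : ℤ) + j) ≤ T (2 ^ n + j) ∧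
          T (2 ^ n + j) ≤ f (-(2 ^ n : ℤ) + j) + 3 / 4 ^ (n+1) := by
      intro j hj
      have hjn : j < 2 ^ n := Finset.mem_range.mp hj
      have hjr : (j:ℝ) ≤ 2 ^ n - 1 := by
        have h := Nat.le_sub_one_of_lt hjn
        have h2 : (j:ℝ) ≤ ((2 ^ n - 1 : ℕ) : ℝ) := by exact_mod_cast h
        rw [Nat.cast_sub Nat.one_le_two_pow] at h2
        push_cast at h2 ⊢; linarith
      set w : ℝ := ((2:ℝ) ^ n - j) * π - β with hwdef
      have hw : 0 < w := by rw [hwdef]; nlinarith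
      have hw2 : w ≤ 2 ^ n * π := by rw [hwdef]; nlinarith [mul_le_mul_of_nonneg_right (by positivity : (0:ℝ) ≤ (j:ℝ)) hπ.le]
      have hp : (0:ℝ) < 2 ^ (n+1) := by positivity
      have harg : (β + ((2 ^ n + j : ℕ) : ℝ) * π) / 2 ^ (n+1) = π - w / 2 ^ (n+1) := by
        rw [hwdef]; push_cast; rw [pow_succ]; field_simp; ring
      have hfval : f (-(2 ^ n : ℤ) + j) = 1 / w ^ 2 := by
        rw [hf, hwdef]
        simp only
        push_cast
        ring_nf
      obtain ⟨l, u⟩ := aux_term hw hw2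
      have hTval : T (2 ^ n + j) = (1 / 4 ^ (n+1)) * (1 / Real.sin (w / 2 ^ (n+1)) ^ 2) := by
        rw [hT]
        simp only
        rw [harg, Real.sin_pi_sub]
      rw [hfval, hTval]
      exact ⟨l, u⟩
    have herr : ∑ j ∈ Finset.range (2 ^ n), (3 / 4 ^ (n+1) : ℝ) ≤ 3 / 2 ^ (n+1) / 2 := by
      rw [Finset.sum_const, nsmul_eq_mul]
      have : ((2:ℝ) ^ n) * (3 / 4 ^ (n+1)) = 3 / 2 ^ (n+1) / 2 := by
        have h4 : (4:ℝ) ^ (n+1) = 2 ^ (n+1) * 2 ^ (n+1) := by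
          rw [← mul_pow]; norm_num
        rw [h4, pow_succ]
        field_simp
      rw [Finset.card_range]
      push_cast
      linarith [this]
    constructor
    · rw [hsplit, hiter]
      have g1 : ∑ j ∈ Finset.range (2 ^ n), f (-(2 ^ n : ℤ) + j)
          ≤ ∑ j ∈ Finset.range (2 ^ n), T (2 ^ n + j) :=
        Finset.sum_le_sum fun j hj => (hb j hj).1
      have g2 : ∑ j ∈ Finset.range (2 ^ n), f (-(2 ^ n : ℤ) + (2 ^ n + j : ℕ))
          ≤ ∑ j ∈ Finset.range (2 ^ n), T j :=
        Finset.sum_le_sum fun j hj => (ha j hj).1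
      linarith
    · rw [hsplit, hiter]
      have g1 : ∑ j ∈ Finset.range (2 ^ n), T (2 ^ n + j)
          ≤ ∑ j ∈ Finset.range (2 ^ n), (f (-(2 ^ n : ℤ) + j) + 3 / 4 ^ (n+1)) :=
        Finset.sum_le_sum fun j hj => (hb j hj).2
      have g2 : ∑ j ∈ Finset.range (2 ^ n), T j
          ≤ ∑ j ∈ Finset.range (2 ^ n), (f (-(2 ^ n : ℤ) + (2 ^ n + j : ℕ)) + 3 / 4 ^ (n+1)) :=
        Finset.sum_le_sum fun j hj => (ha j hj).2
      rw [Finset.sum_add_distrib] at g1 g2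
      linarith [herr]
  -- limits
  have hpow : Tendsto (fun n : ℕ => (3:ℝ) / 2 ^ (n+1)) atTop (nhds 0) := by
    have h2 : Tendsto (fun n : ℕ => ((1:ℝ)/2) ^ n) atTop (nhds 0) :=
      tendsto_pow_atTop_nhds_zero_of_lt_one (by norm_num) (by norm_num)
    have h3 := h2.const_mul (3/2 : ℝ)
    rw [mul_zero] at h3
    refine h3.congr fun n => ?_
    rw [div_pow, one_pow, pow_succ]
    field_simp
  have hlow : Tendsto (fun n : ℕ => L - 3 / 2 ^ (n+1)) atTop (nhds L) := by
    have h := (tendsto_const_nhds : Tendsto (fun _ : ℕ => L) atTop (nhds L)).sub hpow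
    simpa using h
  have hSL : Tendsto S atTop (nhds L) := by
    refine tendsto_of_tendsto_of_tendsto_of_le_of_le hlow tendsto_const_nhds
      (fun n => ?_) (fun n => (key n).1)
    linarith [(key n).2]
  have hmono : Monotone (fun n : ℕ => Finset.Ico (-(2 ^ n : ℤ)) (2 ^ n)) := by
    intro a b hab
    have h2 : (2:ℤ) ^ a ≤ 2 ^ b := pow_le_pow_right₀ (by norm_num) hab
    exact Finset.Ico_subset_Ico (by linarith) h2
  have hexh : ∀ m : ℤ, ∃ n : ℕ, m ∈ Finset.Ico (-(2 ^ n : ℤ)) (2 ^ n) := by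
    intro m
    refine ⟨m.natAbs, ?_⟩
    have h1 : (m.natAbs : ℤ) < 2 ^ m.natAbs := by exact_mod_cast (Nat.lt_two_pow_self (n := m.natAbs))
    have h2 : m ≤ (m.natAbs : ℤ) := by omega
    have h3 : -(m.natAbs : ℤ) ≤ m := by omega
    rw [Finset.mem_Ico]
    constructor <;> linarith
  have htendsF : Tendsto (fun n : ℕ => Finset.Ico (-(2 ^ n : ℤ)) (2 ^ n)) atTop atTop :=
    tendsto_atTop_finset_of_monotone hmono hexh
  have htsum : Tendsto S atTop (nhds (∑' m, f m)) := hsum.hasSum.comp htendsF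
  have heq : ∑' m, f m = L := tendsto_nhds_unique htsum hSL
  exact heq ▸ hsum.hasSum

/-- Partial fraction expansion of `1 / sin² α`: for `α` not an integer multiple of `π`,
`1 / sin² α = 1/α² + ∑_{m=1}^∞ (1/(α - mπ)² + 1/(α + mπ)²)`, equivalently
`1 / sin² α = ∑_{m ∈ ℤ} 1/(α + mπ)²`. -/
theorem one_div_sin_sq_eq_sum (α : ℝ) (hα : ∀ k : ℤ, α ≠ k * π) :
    HasSum
      (fun m : ℕ => 1 / (α - (m + 1 : ℕ) * π) ^ 2 + 1 / (α + (m + 1 : ℕ) * π) ^ 2)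
      (1 / Real.sin α ^ 2 - 1 / α ^ 2)
    ∧ HasSum (fun m : ℤ => 1 / (α + m * π) ^ 2) (1 / Real.sin α ^ 2) := by
  have hπ := Real.pi_pos
  set k : ℤ := ⌊α / π⌋ with hk
  set β : ℝ := α - k * π with hβ
  have hfl : (k:ℝ) ≤ α / π := Int.floor_le _
  have hfl2 : α / π < k + 1 := Int.lt_floor_add_one _
  have hb0 : 0 ≤ β := by
    rw [hβ]
    have h := mul_le_mul_of_nonneg_right hfl hπ.le
    rw [div_mul_cancel₀ _ hπ.ne'] at h
    linarith
  have hbne : β ≠ 0 := by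
    intro h
    exact hα k (by rw [hβ] at h; linarith)
  have hb1 : β < π := by
    rw [hβ]
    have h := mul_lt_mul_of_pos_right hfl2 hπ
    rw [div_mul_cancel₀ _ hπ.ne'] at h
    linarith
  have hβ0 : 0 < β := lt_of_le_of_ne hb0 (Ne.symm hbne)
  have hβsum := aux_beta hβ0 hb1
  have hsin : Real.sin α ^ 2 = Real.sin β ^ 2 := by
    have hαe : α = β + k * π := by rw [hβ]; ring
    rw [hαe, Real.sin_add_int_mul_pi, mul_pow]
    have h2 : ((-1:ℝ) ^ k) ^ 2 = 1 := by
      rw [← zpow_natCast ((-1:ℝ) ^ k) 2, ← zpow_mul, mul_comm, zpow_mul]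
      norm_num
    rw [h2, one_mul]
  have hz : HasSum (fun m : ℤ => 1 / (α + m * π) ^ 2) (1 / Real.sin α ^ 2) := by
    rw [hsin]
    have he := (Equiv.addRight k).hasSum_iff.mpr hβsum
    have hfe : (fun m : ℤ => 1 / (α + m * π) ^ 2)
        = (fun m : ℤ => 1 / (β + m * π) ^ 2) ∘ (Equiv.addRight k) := by
      funext m
      simp only [Function.comp_apply, Equiv.coe_addRight, hβ]
      push_cast
      ring_nf
    rw [hfe]
    exact he
  refine ⟨?_, hz⟩
  have hα0 : α ≠ 0 := by have := hα 0; simpa using this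
  have h1 := hz.nat_add_neg
  have hG : HasSum (fun n : ℕ => 1 / (α + n * π) ^ 2 + 1 / (α - n * π) ^ 2)
      (1 / Real.sin α ^ 2 + 1 / α ^ 2) := by
    push_cast at h1
    convert h1 using 1
    · funext n; ring_nf
    · norm_num
  have h2 := (hasSum_nat_add_iff'
    (f := fun n : ℕ => 1 / (α + n * π) ^ 2 + 1 / (α - n * π) ^ 2) 1).mpr hG
  simp only [Finset.sum_range_one, Nat.cast_zero, zero_mul, add_zero, sub_zero] at h2
  have hfe2 : (fun m : ℕ => 1 / (α - (m + 1 : ℕ) * π) ^ 2 + 1 / (α + (m + 1 : ℕ) * π) ^ 2)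
      = fun n : ℕ => 1 / (α + (n + 1 : ℕ) * π) ^ 2 + 1 / (α - (n + 1 : ℕ) * π) ^ 2 := by
    funext n; push_cast; ring_nf
  have hval : 1 / Real.sin α ^ 2 + 1 / α ^ 2 - (1 / α ^ 2 + 1 / α ^ 2)
      = 1 / Real.sin α ^ 2 - 1 / α ^ 2 := by ring
  rw [hfe2]
  rw [← hval]
  exact h2
end
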